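/- arXiv:1502.06554 — 4 statements merged into one kernel-verified Lean document; each statement's English description precedes it below -/
import Mathlib

section
/- Let B be a real Banach space and q ∈ ℕ. There exist constants c_q, C_q > 0 depending only on q such that for every q-dimensional subspace E ⊆ B and any vectors v_1, …, v_q ∈ E, c_q · |v_q| · Π_{i=1}^{q−1} dist(v_i, span{v_j : i < j ≤ q}) ≤ m_E(P[v_1, …, v_q]) ≤ C_q · |v_q| · Π_{i=1}^{q−1} dist(v_i, span{v_j : i < j ≤ q}), where P[v_1,…,v_q] = {c_1 v_1 + ⋯ + c_q v_q : 0 ≤ c_i ≤ 1} is the parallelepiped spanned by v_1, …, v_q. -/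
open MeasureTheory Filter Metric Set
open scoped ENNReal NNReal Topology

namespace BanachMET

noncomputable section

/-- `ω q`: the Lebesgue volume of the Euclidean unit ball in `ℝ^q`. -/
def ballVol (q : ℕ) : ℝ≥0∞ :=
  volume (Metric.closedBall (0 : EuclideanSpace ℝ (Fin q)) 1)

/-- Extended logarithm of a real number, with the convention `log t = -∞` for `t ≤ 0`. -/
def elog (t : ℝ) : EReal := if t ≤ 0 then ⊥ else ((Real.log t : ℝ) : EReal)

/-- Extended logarithm on `ℝ≥0∞`, with `log 0 = -∞` and `log ⊤ = ⊤`. -/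
def elogE (t : ℝ≥0∞) : EReal :=
  if t = 0 then ⊥ else if t = ⊤ then ⊤ else ((Real.log t.toReal : ℝ) : EReal)

variable {B B' : Type*} [NormedAddCommGroup B] [NormedSpace ℝ B]
  [NormedAddCommGroup B'] [NormedSpace ℝ B']

section Volume
variable [MeasurableSpace B] [BorelSpace B] [MeasurableSpace B'] [BorelSpace B']

/-- The induced volume `m_E` on a finite dimensional subspace `E ⊆ B`: the unique
translation-invariant Borel measure on `E` assigning measure `ω_q` to the closed unit
ball of `E`, where `q = dim E`.  (Junk value `0` if `E` is infinite dimensional.) -/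
def inducedVolume (E : Submodule ℝ B) : Measure E := by
  classical
  exact if h : FiniteDimensional ℝ E then
    (ballVol (Module.finrank ℝ E) /
        (Module.finBasis ℝ E).addHaar (Metric.closedBall (0 : E) 1)) •
      (Module.finBasis ℝ E).addHaar
  else 0

/-- `det(A|E)`: the determinant of `A` on the finite dimensional subspace `E`,
defined as the ratio `m_{AE}(A(B_E)) / m_E(B_E)` (note `m_E(B_E) = ω_q`) if `A`
is injective on `E`, and `0` otherwise. -/
def detOn (A : B →L[ℝ] B') (E : Submodule ℝ B) : ℝ≥0∞ := by
  classical
  exact if Set.InjOn A (E : Set B) then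
    inducedVolume (E.map (A : B →ₗ[ℝ] B'))
        ((Subtype.val) ⁻¹' (A '' ((Subtype.val : E → B) '' Metric.closedBall (0 : E) 1))) /
      ballVol (Module.finrank ℝ E)
  else 0

/-- `V_q(A)`: the maximal `q`-dimensional volume growth of `A`
(with the convention `V_0(A) = 1`). -/
def maxVol (q : ℕ) (A : B →L[ℝ] B') : ℝ≥0∞ := by
  classical
  exact if q = 0 then 1 else
    ⨆ (E : Submodule ℝ B) (_ : FiniteDimensional ℝ E ∧ Module.finrank ℝ E = q), detOn A E

end Volume

/-- The measure of noncompactness `|A|_α`. -/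
def alphaMeasure (A : B →L[ℝ] B') : ℝ :=
  sInf {r : ℝ | 0 < r ∧ ∃ s : Finset B', (A '' Metric.closedBall 0 1) ⊆ ⋃ y ∈ s, Metric.ball y r}

/-- The annihilator `F° ⊆ B*` of a subspace `F ⊆ B` in the continuous dual. -/
def annih (F : Submodule ℝ B) : Submodule ℝ (B →L[ℝ] ℝ) where
  carrier := {ℓ | ∀ v ∈ F, ℓ v = 0}
  add_mem' := by
    intro a b ha hb v hv
    simp [ha v hv, hb v hv]
  zero_mem' := by intro v hv; simp
  smul_mem' := by
    intro c ℓ h v hv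
    simp [h v hv]

/-- The codimension of a subspace: the dimension of its annihilator in `B*`. -/
def codim (F : Submodule ℝ B) : ℕ := Module.finrank ℝ (annih F)

/-- `sin θ(E,F)` where `θ(E,F)` is the minimal angle from `E` to `F`. -/
def sinAngle (E F : Submodule ℝ B) : ℝ :=
  sInf {d : ℝ | ∃ e ∈ E, ‖e‖ = 1 ∧ ∃ f ∈ F, d = ‖e - f‖}

/-- The norm of the (possibly unbounded) projection onto `E` parallel to `F`. -/
def projNorm (E F : Submodule ℝ B) : ℝ :=
  sSup {r : ℝ | ∃ e ∈ E, ∃ f ∈ F, ‖e + f‖ ≤ 1 ∧ r = ‖e‖}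

/-- The Hausdorff distance `d_H` between the unit spheres of two subspaces. -/
def sphDist (E F : Submodule ℝ B) : ℝ :=
  Metric.hausdorffDist ((E : Set B) ∩ Metric.sphere (0 : B) 1)
    ((F : Set B) ∩ Metric.sphere (0 : B) 1)

/-- The gap `δ(U,V)`. -/
def gap (U V : Submodule ℝ B) : ℝ :=
  sSup {d : ℝ | ∃ u ∈ U, ‖u‖ = 1 ∧ d = Metric.infDist u (V : Set B)}

/-- `π` is the (bounded) projection onto `E` parallel to `F`. -/
def IsProjOnto (E F : Submodule ℝ B) (π : B →L[ℝ] B) : Prop :=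
  (∀ e ∈ E, π e = e) ∧ ∀ f ∈ F, π f = 0

/-- The Gelfand numbers `c_q(A)` (for `q ≥ 1`). -/
def gelfand (q : ℕ) (A : B →L[ℝ] B') : ℝ := by
  classical
  exact if q ≤ 1 then ‖A‖
  else sInf {c : ℝ | ∃ R : Submodule ℝ B, IsClosed (R : Set B) ∧ codim R = q - 1 ∧
    c = ‖A.comp R.subtypeL‖}

/-- `p` is an inner product on the subspace `E ⊆ B`. -/
structure IsInnerOn (E : Submodule ℝ B) (p : B → B → ℝ) : Prop where
  add_left : ∀ u ∈ E, ∀ v ∈ E, ∀ w ∈ E, p (u + v) w = p u w + p v w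
  smul_left : ∀ (c : ℝ), ∀ u ∈ E, ∀ v ∈ E, p (c • u) v = c * p u v
  symm : ∀ u ∈ E, ∀ v ∈ E, p u v = p v u
  posdef : ∀ u ∈ E, u ≠ 0 → 0 < p u u

/-- Iterates `T^n_x = T_{f^{n-1} x} ∘ ⋯ ∘ T_x` of the cocycle `T` over the base map `f`. -/
def iter {X : Type*} (T : X → B →L[ℝ] B) (f : X → X) : ℕ → X → B →L[ℝ] B
  | 0, _ => ContinuousLinearMap.id ℝ B
  | n + 1, x => (iter T f n (f x)).comp (T x)

/-- Uniform measurability: `T` is the pointwise norm limit of a sequence of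
finite-valued measurable maps. -/
def UniformlyMeasurable {X : Type*} [MeasurableSpace X] (T : X → B →L[ℝ] B) : Prop :=
  ∃ S : ℕ → X → B →L[ℝ] B,
    (∀ n, (Set.range (S n)).Finite) ∧
    (∀ n (A : B →L[ℝ] B), MeasurableSet {x | S n x = A}) ∧
    ∀ x, Tendsto (fun n => ‖S n x - T x‖) atTop (𝓝 0)

/-- The slow-growing set `F_λ(x)`. -/
def slowSpace {X : Type*} (T : X → B →L[ℝ] B) (f : X → X) (lam : ℝ) (x : X) : Set B :=
  {v : B | Filter.limsup (fun n : ℕ => (((n : ℝ)⁻¹ : ℝ) : EReal) * elog ‖iter T f n x v‖)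
      atTop ≤ (lam : EReal)}



open scoped Pointwise

/-- Auxiliary linear map `t ↦ ∑ i, t i • v i`. -/
noncomputable def lcMap {B : Type*} [NormedAddCommGroup B] [NormedSpace ℝ B]
    {ι : Type*} [Fintype ι] (v : ι → B) : (ι → ℝ) →ₗ[ℝ] B where
  toFun t := ∑ i, t i • v i
  map_add' x y := by simp [add_smul, Finset.sum_add_distrib]
  map_smul' c x := by simp [smul_smul, Finset.smul_sum]

theorem lcMap_apply {B : Type*} [NormedAddCommGroup B] [NormedSpace ℝ B]
    {ι : Type*} [Fintype ι] (v : ι → B) (t : ι → ℝ) : lcMap v t = ∑ i, t i • v i := rfl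

theorem img0Aux {B : Type*} (n : ℕ) (v : Fin (n+1) → B) :
    v '' {j | 0 < j} = Set.range (v ∘ Fin.succ) := by
  ext x
  constructor
  · rintro ⟨j, hj, rfl⟩
    obtain ⟨j', rfl⟩ := Fin.exists_succ_eq.2 (Fin.pos_iff_ne_zero.1 hj)
    exact ⟨j', rfl⟩
  · rintro ⟨j, rfl⟩
    exact ⟨Fin.succ j, j.succ_pos, rfl⟩

theorem imgsuccAux {B : Type*} (n : ℕ) (v : Fin (n+1) → B) (i : Fin n) :
    v '' {j | i.succ < j} = (v ∘ Fin.succ) '' {j | i < j} := by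
  ext x
  constructor
  · rintro ⟨j, hj, rfl⟩
    have hj0 : j ≠ 0 := by rintro rfl; simp at hj
    obtain ⟨j', rfl⟩ := Fin.exists_succ_eq.2 hj0
    exact ⟨j', Fin.succ_lt_succ_iff.1 hj, rfl⟩
  · rintro ⟨j, hj, rfl⟩
    exact ⟨Fin.succ j, Fin.succ_lt_succ_iff.2 hj, rfl⟩

theorem depDistZeroAux {B : Type*} [NormedAddCommGroup B] [NormedSpace ℝ B] :
    ∀ {q : ℕ} (v : Fin q → B), ¬ LinearIndependent ℝ v →
      ∃ i, v i ∈ (Submodule.span ℝ (v '' {j | i < j}) : Set B) := by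
  intro q
  induction q with
  | zero => intro v hv; exact absurd linearIndependent_empty_type hv
  | succ n ih =>
    intro v hv
    rw [← Fin.cons_self_tail v, linearIndependent_fin_cons] at hv
    push_neg at hv
    rcases em (LinearIndependent ℝ (Fin.tail v)) with h | h
    · refine ⟨0, ?_⟩
      have h2 := hv h
      rw [img0Aux n v]
      exact h2
    · obtain ⟨i, hi⟩ := ih (Fin.tail v) h
      refine ⟨i.succ, ?_⟩
      rw [imgsuccAux n v i]
      exact hi

theorem distPosOfLiAux {B : Type*} [NormedAddCommGroup B] [NormedSpace ℝ B] [CompleteSpace B]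
    {q : ℕ} (v : Fin q → B) (hv : LinearIndependent ℝ v) (i : Fin q) :
    0 < Metric.infDist (v i) (Submodule.span ℝ (v '' {j | i < j}) : Set B) := by
  have hfin : FiniteDimensional ℝ (Submodule.span ℝ (v '' {j | i < j})) :=
    FiniteDimensional.span_of_finite ℝ ((Set.toFinite _).image v)
  have hclosed := Submodule.closed_of_finiteDimensional (Submodule.span ℝ (v '' {j | i < j}))
  have hnm : v i ∉ Submodule.span ℝ (v '' {j | i < j}) := hv.notMem_span_image (by simp)
  exact (hclosed.notMem_iff_infDist_pos ⟨0, Submodule.zero_mem _⟩).1 hnm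

theorem coreAux {B : Type*} [NormedAddCommGroup B] [NormedSpace ℝ B] [CompleteSpace B] :
    ∀ q : ℕ, ∃ a A : ℝ, 0 < a ∧ 0 < A ∧ ∀ v : Fin q → B, LinearIndependent ℝ v →
      ENNReal.ofReal a ≤ volume {t : Fin q → ℝ | ‖lcMap v t‖ ≤ 1} *
          ENNReal.ofReal (∏ i, Metric.infDist (v i) (Submodule.span ℝ (v '' {j | i < j}) : Set B)) ∧
      volume {t : Fin q → ℝ | ‖lcMap v t‖ ≤ 1} *
          ENNReal.ofReal (∏ i, Metric.infDist (v i) (Submodule.span ℝ (v '' {j | i < j}) : Set B))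
        ≤ ENNReal.ofReal A := by
  intro q
  induction q with
  | zero =>
    refine ⟨1, 1, one_pos, one_pos, fun v _ => ?_⟩
    have h1 : {t : Fin 0 → ℝ | ‖lcMap v t‖ ≤ 1} = univ := by ext t; simp [lcMap_apply]
    have h2 : volume (univ : Set (Fin 0 → ℝ)) = 1 := by
      rw [MeasureTheory.volume_pi, Measure.pi_univ]; simp
    simp [h1, h2]
  | succ n ih =>
    obtain ⟨a, A, ha, hA, ih⟩ := ih
    refine ⟨a * (1/2)^(n+1), A * 2^(n+1), by positivity, by positivity, fun v hv => ?_⟩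
    set w : Fin n → B := v ∘ Fin.succ with hwdef
    have hw_li : LinearIndependent ℝ w := hv.comp _ (Fin.succ_injective n)
    set F : Submodule ℝ B := Submodule.span ℝ (Set.range w) with hF
    set d : ℝ := Metric.infDist (v 0) (F : Set B) with hd
    have hFfin : FiniteDimensional ℝ F := FiniteDimensional.span_of_finite ℝ (finite_range w)
    have hFclosed : IsClosed (F : Set B) := Submodule.closed_of_finiteDimensional F
    have hv0 : v 0 ∉ F := by
      have h := hv.notMem_span_image (s := {j | 0 < j}) (x := 0) (by simp)
      rwa [img0Aux n v] at h
    have hd_pos : 0 < d := (hFclosed.notMem_iff_infDist_pos ⟨0, F.zero_mem⟩).1 hv0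
    set K : Set (Fin (n+1) → ℝ) := {t | ‖lcMap v t‖ ≤ 1} with hK
    set K' : Set (Fin n → ℝ) := {u | ‖lcMap w u‖ ≤ 1} with hK'
    have hKclosed : IsClosed K :=
      IsClosed.preimage (continuous_norm.comp (lcMap v).continuous_of_finiteDimensional) isClosed_Iic
    have hK'm : MeasurableSet K' :=
      (IsClosed.preimage (continuous_norm.comp (lcMap w).continuous_of_finiteDimensional)
        isClosed_Iic).measurableSet
    have hcons : ∀ (s : ℝ) (u : Fin n → ℝ), lcMap v (Fin.cons s u) = s • v 0 + lcMap w u := by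
      intro s u; simp [lcMap_apply, Fin.sum_univ_succ, hwdef]
    -- Fubini
    have hvolK : volume K = ∫⁻ s : ℝ, volume {u : Fin n → ℝ | ‖s • v 0 + lcMap w u‖ ≤ 1} := by
      have mp := (measurePreserving_piFinSuccAbove (fun _ : Fin (n+1) => (volume : Measure ℝ)) 0).symm
      rw [MeasureTheory.volume_pi, ← mp.measure_preimage]
      · rw [Measure.prod_apply]
        · congr 1 with s
          congr 1 with u
          simp only [mem_preimage, MeasurableEquiv.piFinSuccAbove_symm_apply, mem_setOf_eq, hK]
          rw [show ((0 : Fin (n+1)).insertNthEquiv (fun _ => ℝ)) (s, u) = Fin.cons s u from ?_]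
          · rw [hcons]
          · simp [Fin.insertNthEquiv, Fin.insertNth_zero]
        · exact (MeasurableEquiv.piFinSuccAbove (fun _ : Fin (n+1) => ℝ) 0).symm.measurable
            hKclosed.measurableSet
      · exact hKclosed.measurableSet.nullMeasurableSet
    -- membership of lcMap w in F
    have hlcF : ∀ u : Fin n → ℝ, lcMap w u ∈ F := by
      intro u
      rw [lcMap_apply]
      exact Submodule.sum_mem _ fun i _ => Submodule.smul_mem _ _ (Submodule.subset_span ⟨i, rfl⟩)
    -- scaled set identity
    have hsmul : ∀ r : ℝ, r ≠ 0 → (r • K' : Set (Fin n → ℝ)) = {u | ‖lcMap w u‖ ≤ |r|} := by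
      intro r hr
      ext u
      rw [Set.mem_smul_set_iff_inv_smul_mem₀ hr]
      simp only [mem_setOf_eq, hK', LinearMap.map_smul, norm_smul, norm_inv, Real.norm_eq_abs]
      rw [inv_mul_le_iff₀ (abs_pos.2 hr), mul_one]
    -- upper slice bound
    have hub : ∀ s : ℝ, volume {u : Fin n → ℝ | ‖s • v 0 + lcMap w u‖ ≤ 1}
        ≤ (Set.Icc (-(1/d)) (1/d)).indicator
            (fun _ => ENNReal.ofReal (2^n) * volume K') s := by
      intro s
      rcases eq_empty_or_nonempty {u : Fin n → ℝ | ‖s • v 0 + lcMap w u‖ ≤ 1} with h | ⟨u₀, hu₀⟩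
      · simp [h]
      · simp only [mem_setOf_eq] at hu₀
        have hsIcc : s ∈ Set.Icc (-(1/d)) (1/d) := by
          have habs : |s| ≤ 1/d := by
            rcases eq_or_ne s 0 with rfl | hs
            · simp; positivity
            · have hmem : -(s⁻¹ • lcMap w u₀) ∈ (F : Set B) :=
                Submodule.neg_mem _ (Submodule.smul_mem _ _ (hlcF u₀))
              have h1 : d ≤ ‖v 0 - -(s⁻¹ • lcMap w u₀)‖ := by
                rw [← dist_eq_norm]; exact Metric.infDist_le_dist_of_mem hmem
              have h2 : v 0 - -(s⁻¹ • lcMap w u₀) = s⁻¹ • (s • v 0 + lcMap w u₀) := by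
                rw [smul_add, smul_smul, inv_mul_cancel₀ hs, one_smul]; abel
              rw [h2, norm_smul, norm_inv, Real.norm_eq_abs] at h1
              have h3 : d * |s| ≤ 1 := by
                have habs0 : (0:ℝ) < |s| := abs_pos.2 hs
                calc d * |s| ≤ (|s|⁻¹ * ‖s • v 0 + lcMap w u₀‖) * |s| := by nlinarith
                  _ = ‖s • v 0 + lcMap w u₀‖ * (|s|⁻¹ * |s|) := by ring
                  _ ≤ 1 := by rw [inv_mul_cancel₀ habs0.ne', mul_one]; exact hu₀
              rw [le_div_iff₀ hd_pos]; linarith [mul_comm d |s|]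
          exact abs_le.1 habs
        rw [Set.indicator_of_mem hsIcc]
        have hincl : {u : Fin n → ℝ | ‖s • v 0 + lcMap w u‖ ≤ 1} ⊆ u₀ +ᵥ ((2:ℝ) • K') := by
          intro u hu
          simp only [mem_setOf_eq] at hu
          refine Set.mem_vadd_set.2 ⟨u - u₀, ?_, by rw [vadd_eq_add]; abel⟩
          rw [hsmul 2 two_ne_zero]
          simp only [mem_setOf_eq, map_sub]
          calc ‖lcMap w u - lcMap w u₀‖
              = ‖(s • v 0 + lcMap w u) - (s • v 0 + lcMap w u₀)‖ := by congr 1; abel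
            _ ≤ ‖s • v 0 + lcMap w u‖ + ‖s • v 0 + lcMap w u₀‖ := norm_sub_le _ _
            _ ≤ |2| := by rw [abs_two]; linarith
        calc volume {u : Fin n → ℝ | ‖s • v 0 + lcMap w u‖ ≤ 1}
            ≤ volume (u₀ +ᵥ ((2:ℝ) • K')) := measure_mono hincl
          _ = volume ((2:ℝ) • K') := measure_vadd _ _ _
          _ = ENNReal.ofReal (2^n) * volume K' := by
              rw [Measure.addHaar_smul volume]
              congr 2
              · rw [abs_of_nonneg (by positivity)]
                congr 1
                exact Module.finrank_fin_fun ℝ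
    have hKupper : volume K ≤ ENNReal.ofReal (2/d) * (ENNReal.ofReal (2^n) * volume K') := by
      rw [hvolK]
      calc (∫⁻ s : ℝ, volume {u : Fin n → ℝ | ‖s • v 0 + lcMap w u‖ ≤ 1})
          ≤ ∫⁻ s : ℝ, (Set.Icc (-(1/d)) (1/d)).indicator
              (fun _ => ENNReal.ofReal (2^n) * volume K') s := lintegral_mono hub
        _ = (ENNReal.ofReal (2^n) * volume K') * volume (Set.Icc (-(1/d)) (1/d)) := by
            rw [lintegral_indicator_const measurableSet_Icc]
        _ = ENNReal.ofReal (2/d) * (ENNReal.ofReal (2^n) * volume K') := by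
            rw [Real.volume_Icc, mul_comm]
            congr 2
            ring
    -- lower bound
    obtain ⟨y, hyF, hy⟩ : ∃ y ∈ (F : Set B), dist (v 0) y < 2 * d :=
      Metric.infDist_lt_iff (⟨0, F.zero_mem⟩ : (F : Set B).Nonempty) |>.1 (by
        rw [← hd]; linarith)
    obtain ⟨t₀, ht₀⟩ : ∃ t₀, lcMap w t₀ = y := by
      have : y ∈ Submodule.span ℝ (Set.range w) := hyF
      exact (Submodule.mem_span_range_iff_exists_fun ℝ).1 this
    have hg : ‖v 0 - lcMap w t₀‖ ≤ 2 * d := by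
      rw [ht₀, ← dist_eq_norm]; exact hy.le
    have hlb : ∀ s : ℝ, (Set.Icc (-(1/(4*d))) (1/(4*d))).indicator
        (fun _ => ENNReal.ofReal ((1/2:ℝ)^n) * volume K') s
        ≤ volume {u : Fin n → ℝ | ‖s • v 0 + lcMap w u‖ ≤ 1} := by
      intro s
      rcases em (s ∈ Set.Icc (-(1/(4*d))) (1/(4*d))) with hs | hs
      · rw [Set.indicator_of_mem hs]
        have habs : |s| ≤ 1/(4*d) := abs_le.2 ⟨hs.1, hs.2⟩
        have hincl : ((-s) • t₀) +ᵥ ((1/2:ℝ) • K')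
            ⊆ {u : Fin n → ℝ | ‖s • v 0 + lcMap w u‖ ≤ 1} := by
          rintro x hx
          rw [Set.mem_vadd_set] at hx
          obtain ⟨z, hz, rfl⟩ := hx
          rw [hsmul (1/2) (by norm_num)] at hz
          simp only [mem_setOf_eq] at hz ⊢
          have he : s • v 0 + lcMap w ((-s) • t₀ +ᵥ z) = s • (v 0 - lcMap w t₀) + lcMap w z := by
            rw [vadd_eq_add, map_add, LinearMap.map_smul, smul_sub]
            module
          rw [vadd_eq_add] at he ⊢
          rw [he]
          have h1 : ‖s • (v 0 - lcMap w t₀)‖ ≤ |s| * (2*d) := by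
            rw [norm_smul, Real.norm_eq_abs]
            exact mul_le_mul_of_nonneg_left hg (abs_nonneg s)
          have h2 : |s| * (2*d) ≤ (1/(4*d)) * (2*d) := by
            apply mul_le_mul_of_nonneg_right habs; linarith
          have h3 : (1/(4*d)) * (2*d) = 1/2 := by field_simp; ring
          have h4 : ‖lcMap w z‖ ≤ |1/2| := hz
          rw [abs_of_pos (by norm_num : (0:ℝ) < 1/2)] at h4
          calc ‖s • (v 0 - lcMap w t₀) + lcMap w z‖ ≤ ‖s • (v 0 - lcMap w t₀)‖ + ‖lcMap w z‖ :=
                norm_add_le _ _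
            _ ≤ 1 := by linarith
        calc ENNReal.ofReal ((1/2:ℝ)^n) * volume K'
            = volume (((1/2:ℝ)) • K') := by
              rw [Measure.addHaar_smul volume]
              congr 2
              rw [abs_of_nonneg (by positivity)]
              congr 1
              exact (Module.finrank_fin_fun ℝ).symm
          _ = volume (((-s) • t₀) +ᵥ ((1/2:ℝ) • K')) := (measure_vadd _ _ _).symm
          _ ≤ volume {u : Fin n → ℝ | ‖s • v 0 + lcMap w u‖ ≤ 1} := measure_mono hincl
      · rw [Set.indicator_of_notMem hs]
        exact zero_le ..
    have hKlower : ENNReal.ofReal (1/(2*d)) * (ENNReal.ofReal ((1/2:ℝ)^n) * volume K')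
        ≤ volume K := by
      rw [hvolK]
      calc ENNReal.ofReal (1/(2*d)) * (ENNReal.ofReal ((1/2:ℝ)^n) * volume K')
          = (ENNReal.ofReal ((1/2:ℝ)^n) * volume K') *
              volume (Set.Icc (-(1/(4*d))) (1/(4*d))) := by
            rw [Real.volume_Icc, mul_comm]
            congr 1
            rw [show (1/(4*d) - -(1/(4*d))) = 1/(2*d) by field_simp; ring]
        _ = ∫⁻ s : ℝ, (Set.Icc (-(1/(4*d))) (1/(4*d))).indicator
              (fun _ => ENNReal.ofReal ((1/2:ℝ)^n) * volume K') s := by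
            rw [lintegral_indicator_const measurableSet_Icc]
        _ ≤ ∫⁻ s : ℝ, volume {u : Fin n → ℝ | ‖s • v 0 + lcMap w u‖ ≤ 1} := lintegral_mono hlb
    -- product identity
    have hD0 : (0:ℝ) ≤ ∏ i : Fin n, Metric.infDist (w i)
        (Submodule.span ℝ (w '' {j | i < j}) : Set B) :=
      Finset.prod_nonneg fun i _ => Metric.infDist_nonneg
    set D : ℝ := ∏ i : Fin n, Metric.infDist (w i)
        (Submodule.span ℝ (w '' {j | i < j}) : Set B) with hDdef
    have hprod : (∏ i : Fin (n+1), Metric.infDist (v i)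
        (Submodule.span ℝ (v '' {j | i < j}) : Set B)) = d * D := by
      rw [Fin.prod_univ_succ]
      congr 1
      · rw [hd, hF, ← img0Aux n v]
      · rw [hDdef]
        apply Finset.prod_congr rfl
        intro i _
        rw [imgsuccAux n v i]
        rfl
    obtain ⟨ihl, ihu⟩ := ih w hw_li
    rw [← hDdef] at ihl ihu
    constructor
    · -- lower bound
      rw [hprod]
      have e1 : ENNReal.ofReal (a * (1/2)^(n+1))
          = ENNReal.ofReal (1/(2*d)) * (ENNReal.ofReal ((1/2:ℝ)^n) * ENNReal.ofReal a) *
            ENNReal.ofReal d := by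
        rw [← ENNReal.ofReal_mul (by positivity), ← ENNReal.ofReal_mul (by positivity),
          ← ENNReal.ofReal_mul (by positivity)]
        congr 1
        field_simp
        ring
      rw [e1, ENNReal.ofReal_mul hd_pos.le]
      calc ENNReal.ofReal (1/(2*d)) * (ENNReal.ofReal ((1/2:ℝ)^n) * ENNReal.ofReal a) *
            ENNReal.ofReal d
          ≤ ENNReal.ofReal (1/(2*d)) *
              (ENNReal.ofReal ((1/2:ℝ)^n) * (volume K' * ENNReal.ofReal D)) *
              ENNReal.ofReal d := by gcongr
        _ = (ENNReal.ofReal (1/(2*d)) * (ENNReal.ofReal ((1/2:ℝ)^n) * volume K')) *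
              (ENNReal.ofReal d * ENNReal.ofReal D) := by ring
        _ ≤ volume K * (ENNReal.ofReal d * ENNReal.ofReal D) := by gcongr
    · -- upper bound
      rw [hprod, ENNReal.ofReal_mul hd_pos.le]
      calc volume K * (ENNReal.ofReal d * ENNReal.ofReal D)
          ≤ (ENNReal.ofReal (2/d) * (ENNReal.ofReal (2^n) * volume K')) *
              (ENNReal.ofReal d * ENNReal.ofReal D) := by gcongr
        _ = (ENNReal.ofReal (2/d) * ENNReal.ofReal d) * ENNReal.ofReal (2^n) *
              (volume K' * ENNReal.ofReal D) := by ring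
        _ ≤ (ENNReal.ofReal (2/d) * ENNReal.ofReal d) * ENNReal.ofReal (2^n) *
              ENNReal.ofReal A := by gcongr
        _ = ENNReal.ofReal (A * 2^(n+1)) := by
            rw [← ENNReal.ofReal_mul (by positivity), ← ENNReal.ofReal_mul (by positivity),
              ← ENNReal.ofReal_mul (by positivity)]
            congr 1
            field_simp
            ring


theorem inducedParallelepipedAux {B : Type*} [NormedAddCommGroup B] [NormedSpace ℝ B]
    [MeasurableSpace B] [BorelSpace B]
    (E : Submodule ℝ B) (hfd : FiniteDimensional ℝ E) {q : ℕ}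
    (hq : 1 ≤ q) (hfr : Module.finrank ℝ E = q) (v : Fin q → B) (hvE : ∀ i, v i ∈ E)
    (hli : LinearIndependent ℝ v) :
    inducedVolume E ((Subtype.val : E → B) ⁻¹'
        {x : B | ∃ t : Fin q → ℝ, (∀ i, t i ∈ Set.Icc (0:ℝ) 1) ∧ x = ∑ i, t i • v i})
      = ballVol q / volume {t : Fin q → ℝ | ‖lcMap v t‖ ≤ 1} := by
  classical
  haveI := hfd
  set vE : Fin q → E := fun i => ⟨v i, hvE i⟩ with hvEdef
  have hliE : LinearIndependent ℝ vE := by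
    apply LinearIndependent.of_comp E.subtype
    exact hli
  haveI : Nonempty (Fin q) := ⟨⟨0, hq⟩⟩
  set b : Module.Basis (Fin q) ℝ E :=
    basisOfLinearIndependentOfCardEqFinrank hliE (by rw [Fintype.card_fin, hfr]) with hbdef
  have hb : ⇑b = vE := coe_basisOfLinearIndependentOfCardEqFinrank _ _
  have hcoe : ∀ t : Fin q → ℝ, ((∑ i, t i • vE i : E) : B) = ∑ i, t i • v i := by
    intro t
    push_cast
    rfl
  have hSet : (Subtype.val : E → B) ⁻¹'
      {x : B | ∃ t : Fin q → ℝ, (∀ i, t i ∈ Set.Icc (0:ℝ) 1) ∧ x = ∑ i, t i • v i}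
      = _root_.parallelepiped vE := by
    ext x
    simp only [Set.mem_preimage, Set.mem_setOf_eq, _root_.parallelepiped, Set.mem_image]
    constructor
    · rintro ⟨t, ht, hx⟩
      refine ⟨t, ⟨fun i => (ht i).1, fun i => (ht i).2⟩, ?_⟩
      apply Subtype.val_injective
      rw [hcoe t, ← hx]
    · rintro ⟨t, ht, rfl⟩
      exact ⟨t, fun i => ⟨ht.1 i, ht.2 i⟩, hcoe t⟩
  rw [hSet]
  set k : ℝ≥0∞ := (Measure.addHaarScalarFactor (Module.finBasis ℝ E).addHaar b.addHaar : ℝ≥0∞)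
    with hkdef
  have hsmul' : ∀ X : Set E,
      (Module.finBasis ℝ E).addHaar X = k * b.addHaar X := by
    intro X
    conv_lhs => rw [Measure.isAddLeftInvariant_eq_smul (Module.finBasis ℝ E).addHaar b.addHaar]
    rw [Measure.smul_apply, ENNReal.smul_def, smul_eq_mul]
  have hpar : (Module.finBasis ℝ E).addHaar (_root_.parallelepiped vE) = k := by
    rw [hsmul', ← hb, Module.Basis.addHaar_self, mul_one]
  have hk0 : k ≠ 0 := by
    rw [← hpar]
    refine (Measure.measure_pos_of_nonempty_interior _ ?_).ne'
    rw [← hb, ← Module.Basis.coe_parallelepiped]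
    exact b.parallelepiped.interior_nonempty
  have hkt : k ≠ ⊤ := by
    rw [← hpar, ← hb, ← Module.Basis.coe_parallelepiped]
    exact b.parallelepiped.isCompact.measure_lt_top.ne
  have hball : b.addHaar (Metric.closedBall (0 : E) 1)
      = volume {t : Fin q → ℝ | ‖lcMap v t‖ ≤ 1} := by
    have hmeas : b.addHaar = Measure.map (b.equivFunL.symm) volume := by
      rw [Module.Basis.addHaar_eq_iff]
      rw [Measure.map_apply (b.equivFunL.symm).continuous.measurable
        b.parallelepiped.isCompact.isClosed.measurableSet]
      have hsymmt : ∀ t : Fin q → ℝ, (b.equivFunL.symm t : E) = ∑ i, t i • b i := fun t => by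
        rw [← Module.Basis.equivFun_symm_apply]; rfl
      have hpre : (⇑(b.equivFunL.symm)) ⁻¹' ↑b.parallelepiped = Set.Icc 0 1 := by
        ext t
        rw [Module.Basis.coe_parallelepiped]
        simp only [_root_.parallelepiped, Set.mem_image, Set.mem_preimage]
        constructor
        · rintro ⟨s, hs, heq⟩
          rw [hsymmt t] at heq
          have h1 : b.equivFun.symm s = b.equivFun.symm t := by
            rw [Module.Basis.equivFun_symm_apply, Module.Basis.equivFun_symm_apply]
            exact heq
          rwa [← b.equivFun.symm.injective h1]
        · intro ht
          exact ⟨t, ht, (hsymmt t).symm⟩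
      rw [hpre]
      simp [Real.volume_Icc_pi]
    rw [hmeas, Measure.map_apply (b.equivFunL.symm).continuous.measurable
      Metric.isClosed_closedBall.measurableSet]
    congr 1
    ext t
    simp only [Set.mem_preimage, Metric.mem_closedBall, Set.mem_setOf_eq]
    rw [dist_zero_right]
    have hc2 : (b.equivFunL.symm t : B) = lcMap v t := by
      show ((b.equivFun.symm t : E) : B) = lcMap v t
      rw [Module.Basis.equivFun_symm_apply, lcMap_apply, hb, hcoe]
    rw [show ‖b.equivFunL.symm t‖ = ‖(b.equivFunL.symm t : B)‖ from rfl, hc2]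
  have hbv : ballVol (Module.finrank ℝ E) = ballVol q := by rw [hfr]
  have hIV : inducedVolume E (_root_.parallelepiped vE)
      = (ballVol q / (Module.finBasis ℝ E).addHaar (Metric.closedBall (0 : E) 1)) *
        (Module.finBasis ℝ E).addHaar (_root_.parallelepiped vE) := by
    unfold inducedVolume
    rw [dif_pos hfd, Measure.smul_apply, smul_eq_mul, hbv]
  rw [hIV, hpar, hsmul' (Metric.closedBall (0 : E) 1), ← hball]
  set bb := b.addHaar (Metric.closedBall (0 : E) 1)
  calc ballVol q / (k * bb) * k
      = ballVol q * bb⁻¹ * (k⁻¹ * k) := by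
        rw [div_eq_mul_inv, ENNReal.mul_inv (Or.inl hk0) (Or.inl hkt)]
        ring
    _ = ballVol q / bb := by
        rw [ENNReal.inv_mul_cancel hk0 hkt, mul_one, div_eq_mul_inv]


theorem statement4
    {B : Type*} [NormedAddCommGroup B] [NormedSpace ℝ B] [CompleteSpace B]
    [MeasurableSpace B] [BorelSpace B] (q : ℕ) (hq : 1 ≤ q) :
    ∃ c C : ℝ, 0 < c ∧ 0 < C ∧
      ∀ (E : Submodule ℝ B), FiniteDimensional ℝ E → Module.finrank ℝ E = q →
      ∀ v : Fin q → B, (∀ i, v i ∈ E) →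
        ENNReal.ofReal (c * ∏ i, Metric.infDist (v i)
            (Submodule.span ℝ (v '' {j | i < j}) : Set B)) ≤
          inducedVolume E ((Subtype.val : E → B) ⁻¹'
            {x : B | ∃ t : Fin q → ℝ, (∀ i, t i ∈ Set.Icc (0 : ℝ) 1) ∧ x = ∑ i, t i • v i}) ∧
        inducedVolume E ((Subtype.val : E → B) ⁻¹'
            {x : B | ∃ t : Fin q → ℝ, (∀ i, t i ∈ Set.Icc (0 : ℝ) 1) ∧ x = ∑ i, t i • v i}) ≤
          ENNReal.ofReal (C * ∏ i, Metric.infDist (v i)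
            (Submodule.span ℝ (v '' {j | i < j}) : Set B)) := by
  classical
  obtain ⟨a, A, ha, hA, hcore⟩ := coreAux (B := B) q
  have hball_fin : ballVol q ≠ ⊤ := by
    rw [ballVol]
    exact (isCompact_closedBall _ _).measure_lt_top.ne
  have hball_pos : 0 < ballVol q := by
    rw [ballVol]
    exact measure_closedBall_pos volume _ one_pos
  have hbR : 0 < (ballVol q).toReal := ENNReal.toReal_pos hball_pos.ne' hball_fin
  refine ⟨(ballVol q).toReal / A, (ballVol q).toReal / a, by positivity, by positivity,
    fun E hfd hfr v hvE => ?_⟩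
  haveI := hfd
  by_cases hli : LinearIndependent ℝ v
  · have hP_pos : 0 < ∏ i, Metric.infDist (v i)
        (Submodule.span ℝ (v '' {j | i < j}) : Set B) :=
      Finset.prod_pos fun i _ => distPosOfLiAux v hli i
    obtain ⟨hlow, hup⟩ := hcore v hli
    set VK := volume {t : Fin q → ℝ | ‖lcMap v t‖ ≤ 1} with hVK
    set P := ∏ i, Metric.infDist (v i) (Submodule.span ℝ (v '' {j | i < j}) : Set B) with hP
    have hVK0 : VK ≠ 0 := by
      intro h
      rw [h, zero_mul] at hlow
      simp only [nonpos_iff_eq_zero, ENNReal.ofReal_eq_zero] at hlow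
      linarith
    have hVKt : VK ≠ ⊤ := by
      intro h
      rw [h, ENNReal.top_mul
        (by simpa using hP_pos : ENNReal.ofReal P ≠ 0)] at hup
      exact absurd hup (by simp)
    rw [inducedParallelepipedAux E hfd hq hfr v hvE hli]
    constructor
    · rw [← hVK, ENNReal.le_div_iff_mul_le (Or.inl hVK0) (Or.inl hVKt)]
      calc ENNReal.ofReal ((ballVol q).toReal / A * P) * VK
          = ENNReal.ofReal ((ballVol q).toReal / A) * (VK * ENNReal.ofReal P) := by
            rw [ENNReal.ofReal_mul (by positivity)]; ring
        _ ≤ ENNReal.ofReal ((ballVol q).toReal / A) * ENNReal.ofReal A := by gcongr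
        _ = ENNReal.ofReal ((ballVol q).toReal / A * A) :=
            (ENNReal.ofReal_mul (by positivity)).symm
        _ = ballVol q := by rw [div_mul_cancel₀ _ hA.ne', ENNReal.ofReal_toReal hball_fin]
    · rw [← hVK, ENNReal.div_le_iff_le_mul (Or.inl hVK0) (Or.inl hVKt)]
      calc ballVol q
          = ENNReal.ofReal ((ballVol q).toReal / a * a) := by
            rw [div_mul_cancel₀ _ ha.ne', ENNReal.ofReal_toReal hball_fin]
        _ = ENNReal.ofReal ((ballVol q).toReal / a) * ENNReal.ofReal a :=
            ENNReal.ofReal_mul (by positivity)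
        _ ≤ ENNReal.ofReal ((ballVol q).toReal / a) * (VK * ENNReal.ofReal P) := by gcongr
        _ = ENNReal.ofReal ((ballVol q).toReal / a * P) * VK := by
            rw [ENNReal.ofReal_mul (by positivity)]; ring
  · obtain ⟨i0, hi0⟩ := depDistZeroAux v hli
    have hPzero : (∏ i, Metric.infDist (v i)
        (Submodule.span ℝ (v '' {j | i < j}) : Set B)) = 0 :=
      Finset.prod_eq_zero (Finset.mem_univ i0) (Metric.infDist_zero_of_mem hi0)
    rw [hPzero, mul_zero, mul_zero, ENNReal.ofReal_zero]
    set vE : Fin q → E := fun i => ⟨v i, hvE i⟩ with hvEdef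
    have hcoe : ∀ t : Fin q → ℝ, ((∑ i, t i • vE i : E) : B) = ∑ i, t i • v i := by
      intro t
      push_cast
      rfl
    have hsub : (Subtype.val : E → B) ⁻¹'
        {x : B | ∃ t : Fin q → ℝ, (∀ i, t i ∈ Set.Icc (0:ℝ) 1) ∧ x = ∑ i, t i • v i}
        ⊆ (Submodule.span ℝ (Set.range vE) : Set E) := by
      rintro x hx
      obtain ⟨t, ht, hxe⟩ := hx
      have hxE : x = ∑ i, t i • vE i := by
        apply Subtype.val_injective
        rw [hcoe t]
        exact hxe
      rw [hxE]
      exact Submodule.sum_mem _ fun i _ =>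
        Submodule.smul_mem _ _ (Submodule.subset_span ⟨i, rfl⟩)
    have hne : Submodule.span ℝ (Set.range vE) ≠ ⊤ := by
      intro htop
      apply hli
      have hcard : Fintype.card (Fin q) = Set.finrank ℝ (Set.range vE) := by
        rw [Fintype.card_fin, Set.finrank, htop, finrank_top, hfr]
      have hliE : LinearIndependent ℝ vE := linearIndependent_iff_card_eq_finrank_span.2 hcard
      exact hliE.map' E.subtype E.ker_subtype
    have h0 : inducedVolume E (Submodule.span ℝ (Set.range vE) : Set E) = 0 := by
      unfold inducedVolume
      rw [dif_pos hfd, Measure.smul_apply, Measure.addHaar_submodule _ _ hne, smul_zero]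
    constructor
    · exact zero_le ..
    · exact le_of_eq (measure_mono_null hsub h0)


end
end BanachMET
end

section
/- Let B be a real Banach space and q ∈ ℕ. Let U, V be closed subspaces of B such that either dim U = dim V = q or codim U = codim V = q. If δ(U, V) < 1/q, then δ(V, U) ≤ q δ(U, V) / (1 − q δ(U, V)). -/
open MeasureTheory Filter Metric Set
open scoped ENNReal NNReal Topology

namespace BanachMET

noncomputable section

variable {B B' : Type*} [NormedAddCommGroup B] [NormedSpace ℝ B]
  [NormedAddCommGroup B'] [NormedSpace ℝ B']

section GapAux
variable {E : Type*} [NormedAddCommGroup E] [NormedSpace ℝ E]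

lemma my_le_infDist {x : E} {s : Set E} {b : ℝ} (hs : s.Nonempty)
    (h : ∀ y ∈ s, b ≤ dist x y) : b ≤ infDist x s := by
  by_contra hlt
  push_neg at hlt
  obtain ⟨y, hy, hd⟩ := (infDist_lt_iff hs).1 hlt
  exact absurd (h y hy) (not_le.2 hd)

lemma gap_bddAbove (U V : Submodule ℝ E) :
    BddAbove {d : ℝ | ∃ u ∈ U, ‖u‖ = 1 ∧ d = Metric.infDist u (V : Set E)} := by
  refine ⟨1, ?_⟩
  rintro d ⟨u, hu, hnorm, rfl⟩
  calc infDist u (V : Set E) ≤ dist u 0 := infDist_le_dist_of_mem V.zero_mem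
    _ = 1 := by simp [hnorm]

lemma gap_nonneg (U V : Submodule ℝ E) : 0 ≤ gap U V := by
  apply Real.sSup_nonneg
  rintro d ⟨u, hu, hnorm, rfl⟩
  exact infDist_nonneg

lemma infDist_le_gap {U V : Submodule ℝ E} {u : E} (hu : u ∈ U) (hnorm : ‖u‖ = 1) :
    infDist u (V : Set E) ≤ gap U V :=
  le_csSup (gap_bddAbove U V) ⟨u, hu, hnorm, rfl⟩

lemma infDist_smul (V : Submodule ℝ E) (c : ℝ) (hc : c ≠ 0) (x : E) :
    infDist (c • x) (V : Set E) = |c| * infDist x (V : Set E) := by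
  have hne : (V : Set E).Nonempty := ⟨0, V.zero_mem⟩
  have hc' : 0 < |c| := abs_pos.2 hc
  apply le_antisymm
  · apply le_of_forall_pos_le_add
    intro ε hε
    obtain ⟨w, hw, hdw⟩ := (infDist_lt_iff hne).1
      (show infDist x (V : Set E) < infDist x (V : Set E) + ε / |c| by linarith [div_pos hε hc'])
    calc infDist (c • x) (V : Set E) ≤ dist (c • x) (c • w) :=
          infDist_le_dist_of_mem (V.smul_mem c hw)
      _ = |c| * dist x w := by
          simp [dist_eq_norm, ← smul_sub, norm_smul, Real.norm_eq_abs]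
      _ ≤ |c| * (infDist x (V : Set E) + ε / |c|) := by
          apply mul_le_mul_of_nonneg_left (le_of_lt hdw) (abs_nonneg c)
      _ = |c| * infDist x (V : Set E) + ε := by
          field_simp
  · apply my_le_infDist hne
    intro y hy
    have : c⁻¹ • y ∈ V := V.smul_mem _ hy
    have h1 : infDist x (V : Set E) ≤ dist x (c⁻¹ • y) := infDist_le_dist_of_mem this
    have h2 : dist (c • x) y = |c| * dist x (c⁻¹ • y) := by
      have : c • x - y = c • (x - c⁻¹ • y) := by
        rw [smul_sub, smul_inv_smul₀ hc]
      rw [dist_eq_norm, dist_eq_norm, this, norm_smul, Real.norm_eq_abs]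
    rw [h2]
    exact mul_le_mul_of_nonneg_left h1 (abs_nonneg c)

lemma infDist_le_gap_mul {U V : Submodule ℝ E} {x : E} (hx : x ∈ U) :
    infDist x (V : Set E) ≤ gap U V * ‖x‖ := by
  rcases eq_or_ne x 0 with rfl | hx0
  · simp [infDist_zero_of_mem V.zero_mem]
  · have hn : ‖x‖ ≠ 0 := norm_ne_zero_iff.2 hx0
    have hu : ‖x‖⁻¹ • x ∈ U := U.smul_mem _ hx
    have hnorm : ‖(‖x‖⁻¹ • x)‖ = 1 := by
      rw [norm_smul, Real.norm_eq_abs, abs_inv, abs_norm]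
      field_simp
    have h := infDist_le_gap (V := V) hu hnorm
    have hs := infDist_smul V (‖x‖⁻¹) (inv_ne_zero hn) x
    rw [hs] at h
    rw [abs_inv, abs_norm] at h
    have := mul_le_mul_of_nonneg_left h (norm_nonneg x)
    calc infDist x (V : Set E) = ‖x‖ * (‖x‖⁻¹ * infDist x (V : Set E)) := by field_simp
      _ ≤ ‖x‖ * gap U V := this
      _ = gap U V * ‖x‖ := mul_comm _ _

lemma gap_le {U V : Submodule ℝ E} {c : ℝ} (hc : 0 ≤ c)
    (h : ∀ u ∈ U, ‖u‖ = 1 → infDist u (V : Set E) ≤ c) : gap U V ≤ c := by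
  apply Real.sSup_le _ hc
  rintro d ⟨u, hu, hnorm, rfl⟩
  exact h u hu hnorm

lemma auerbach (U : Submodule ℝ E) [FiniteDimensional ℝ U] {q : ℕ} (hq0 : q ≠ 0)
    (hq : Module.finrank ℝ U = q) :
    ∃ (u : Fin q → E) (L : Fin q → (E →L[ℝ] ℝ)),
      (∀ i, u i ∈ U) ∧ (∀ i, ‖u i‖ = 1) ∧ (∀ i, ‖L i‖ ≤ 1) ∧
      (∀ x ∈ U, x = ∑ i, L i x • u i) := by
  classical
  haveI : Nonempty (Fin q) := ⟨⟨0, Nat.pos_of_ne_zero hq0⟩⟩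
  let b : Module.Basis (Fin q) ℝ U := (Module.finBasis ℝ U).reindex (finCongr hq)
  let D : (Fin q → U) → ℝ := fun x => (Matrix.of fun i j => b.coord i (x j)).det
  have hDcont : Continuous D := by
    apply Continuous.matrix_det
    apply continuous_matrix
    intro i j
    exact ((b.coord i).continuous_of_finiteDimensional).comp (continuous_apply j)
  set K : Set (Fin q → U) := Set.pi univ (fun _ => closedBall (0 : U) 1) with hKdef
  have hKc : IsCompact K := isCompact_univ_pi (fun _ => isCompact_closedBall 0 1)
  have hKne : K.Nonempty := ⟨0, by intro i _; simp⟩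
  obtain ⟨x₀, hx₀K, hmax⟩ := hKc.exists_isMaxOn hKne
    ((continuous_abs.comp hDcont).continuousOn)
  have hmax' : ∀ y ∈ K, |D y| ≤ |D x₀| := fun y hy => hmax hy
  -- the matrix of a tuple
  have hx₀mem : ∀ i, x₀ i ∈ closedBall (0 : U) 1 := fun i => hx₀K i (mem_univ i)
  -- positivity of the max
  have hweight : ∀ j, (0:ℝ) < ‖b j‖ := fun j => norm_pos_iff.2 (b.ne_zero j)
  have hDw : D (fun j => (‖b j‖)⁻¹ • b j) = ∏ j, (‖b j‖)⁻¹ := by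
    have : (Matrix.of fun i j => b.coord i ((‖b j‖)⁻¹ • b j)) =
        Matrix.diagonal (fun i => (‖b i‖)⁻¹) := by
      ext i j
      simp only [Matrix.of_apply, _root_.map_smul, smul_eq_mul, Matrix.diagonal_apply]
      rw [Module.Basis.coord_apply, Module.Basis.repr_self]
      by_cases h : i = j
      · subst h; simp
      · simp [Finsupp.single_apply, h, Ne.symm h]
    simp only [D, this, Matrix.det_diagonal]
  have hm : 0 < |D x₀| := by
    have hw : (fun j => (‖b j‖)⁻¹ • b j) ∈ K := by
      intro j _
      simp only [mem_closedBall, dist_zero_right, norm_smul, norm_inv, norm_norm]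
      rw [inv_mul_cancel₀ (ne_of_gt (hweight j))]
    refine lt_of_lt_of_le ?_ (hmax' _ hw)
    rw [hDw, Finset.abs_prod]
    apply Finset.prod_pos
    intro j _
    rw [abs_inv, abs_norm]
    exact inv_pos.2 (hweight j)
  have hD0 : D x₀ ≠ 0 := fun h => by simp [h] at hm
  -- matrix identity for updates
  have hupd : ∀ (i : Fin q) (y : U),
      (Matrix.of fun i' j => b.coord i' (Function.update x₀ i y j)) =
        Matrix.updateCol (Matrix.of fun i' j => b.coord i' (x₀ j)) i
          (fun i' => b.coord i' y) := by
    intro i y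
    ext i' j
    rw [Matrix.updateCol_apply]
    by_cases h : j = i
    · subst h; simp
    · simp [Function.update_apply, h]
  -- the dual functionals on U
  let ℓ : Fin q → (U →ₗ[ℝ] ℝ) := fun i =>
    { toFun := fun y => D (Function.update x₀ i y) / D x₀
      map_add' := by
        intro y z
        simp only [D, hupd]
        rw [show (fun i' => b.coord i' (y + z)) =
            (fun i' => b.coord i' y) + (fun i' => b.coord i' z) from
          funext fun i' => by simp, Matrix.det_updateCol_add]
        ring
      map_smul' := by
        intro c y
        simp only [D, hupd, RingHom.id_apply]
        rw [show (fun i' => b.coord i' (c • y)) = c • (fun i' => b.coord i' y) from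
          funext fun i' => by simp, Matrix.det_updateCol_smul]
        simp only [smul_eq_mul]
        ring }
  have hℓ_apply : ∀ i y, ℓ i y = D (Function.update x₀ i y) / D x₀ := fun i y => rfl
  have hℓ_diag : ∀ i, ℓ i (x₀ i) = 1 := by
    intro i
    rw [hℓ_apply, Function.update_eq_self, div_self hD0]
  have hℓ_off : ∀ i j, j ≠ i → ℓ i (x₀ j) = 0 := by
    intro i j hji
    rw [hℓ_apply]
    have : D (Function.update x₀ i (x₀ j)) = 0 := by
      apply Matrix.det_zero_of_column_eq hji.symm   -- i ≠ j: columns i and j equal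
      intro k
      simp [Function.update_apply, hji]
    rw [this, zero_div]
  have hℓ_bound : ∀ i (y : U), |ℓ i y| ≤ ‖y‖ := by
    intro i y
    have hball : ∀ z : U, ‖z‖ ≤ 1 → |ℓ i z| ≤ 1 := by
      intro z hz
      have hmem : Function.update x₀ i z ∈ K := by
        intro j _
        rcases eq_or_ne j i with rfl | h
        · simpa [mem_closedBall, dist_zero_right] using hz
        · simp only [Function.update_apply, if_neg h]
          exact hx₀mem j
      have := hmax' _ hmem
      rw [hℓ_apply, abs_div]
      rw [div_le_one hm]
      exact this
    rcases eq_or_ne y 0 with rfl | hy0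
    · simp
    · have hn : (0:ℝ) < ‖y‖ := norm_pos_iff.2 hy0
      have := hball (‖y‖⁻¹ • y) (by rw [norm_smul, norm_inv, norm_norm,
        inv_mul_cancel₀ (ne_of_gt hn)])
      rw [_root_.map_smul, smul_eq_mul, abs_mul, abs_inv, abs_norm] at this
      calc |ℓ i y| = ‖y‖ * (‖y‖⁻¹ * |ℓ i y|) := by
              rw [← mul_assoc, mul_inv_cancel₀ (ne_of_gt hn), one_mul]
        _ ≤ ‖y‖ * 1 := mul_le_mul_of_nonneg_left this (le_of_lt hn)
        _ = ‖y‖ := mul_one _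
  -- x₀ is a basis
  have li : LinearIndependent ℝ x₀ := by
    rw [Fintype.linearIndependent_iff]
    intro g hg j
    have := congrArg (ℓ j) hg
    rw [_root_.map_sum, _root_.map_zero] at this
    simp only [_root_.map_smul, smul_eq_mul] at this
    rwa [Finset.sum_eq_single j (fun i _ hij => by rw [hℓ_off j i hij, mul_zero])
      (fun h => absurd (Finset.mem_univ j) h), hℓ_diag, mul_one] at this
  have hcard : Fintype.card (Fin q) = Module.finrank ℝ U := by simp [hq]
  let B' : Module.Basis (Fin q) ℝ U := basisOfLinearIndependentOfCardEqFinrank li hcard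
  have hB' : ∀ i, B' i = x₀ i := fun i =>
    congrFun (coe_basisOfLinearIndependentOfCardEqFinrank li hcard) i
  have hrep : ∀ y : U, y = ∑ i, ℓ i y • x₀ i := by
    intro y
    have hsum := B'.sum_repr y
    have hcoef : ∀ j, B'.repr y j = ℓ j y := by
      intro j
      conv_rhs => rw [← hsum]
      rw [_root_.map_sum]
      simp only [_root_.map_smul, smul_eq_mul, hB']
      rw [Finset.sum_eq_single j (fun i _ hij => by rw [hℓ_off j i hij, mul_zero])
        (fun h => absurd (Finset.mem_univ j) h), hℓ_diag, mul_one]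
    conv_lhs => rw [← hsum]
    refine Finset.sum_congr rfl fun i _ => ?_
    rw [hcoef i, hB']
  -- continuity + Hahn-Banach
  let Lc : Fin q → (U →L[ℝ] ℝ) := fun i => LinearMap.toContinuousLinearMap (ℓ i)
  have hLcnorm : ∀ i, ‖Lc i‖ ≤ 1 := by
    intro i
    apply ContinuousLinearMap.opNorm_le_bound _ zero_le_one
    intro y
    rw [one_mul]
    have : ‖(Lc i) y‖ = |ℓ i y| := by
      simp [Lc, Real.norm_eq_abs]
    rw [this]
    exact hℓ_bound i y
  choose g hgext hgnorm using fun i => exists_extension_norm_eq (U : Subspace ℝ E) (Lc i)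
  refine ⟨fun i => (x₀ i : E), g, fun i => (x₀ i).2, ?_, ?_, ?_⟩
  · intro i
    have h1 : ‖(x₀ i : E)‖ ≤ 1 := by
      have := hx₀mem i
      rwa [mem_closedBall, dist_zero_right] at this
    have h2 : (1:ℝ) ≤ ‖(x₀ i : E)‖ := by
      have := hℓ_bound i (x₀ i)
      rw [hℓ_diag i] at this
      simpa using this
    linarith
  · intro i
    rw [hgnorm i]
    exact hLcnorm i
  · intro x hx
    have := hrep ⟨x, hx⟩
    have hgval : ∀ i, g i x = ℓ i ⟨x, hx⟩ := by
      intro i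
      have := hgext i ⟨x, hx⟩
      simpa [Lc] using this
    calc x = ((⟨x, hx⟩ : U) : E) := rfl
      _ = ((∑ i, ℓ i ⟨x, hx⟩ • x₀ i : U) : E) := by rw [← hrep ⟨x, hx⟩]
      _ = ∑ i, ℓ i ⟨x, hx⟩ • (x₀ i : E) := by
          push_cast
          rfl
      _ = ∑ i, g i x • (x₀ i : E) := by
          refine Finset.sum_congr rfl fun i _ => ?_
          rw [hgval i]

lemma gap_bound_fin (q : ℕ) (U V : Submodule ℝ E)
    [FiniteDimensional ℝ U] [FiniteDimensional ℝ V]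
    (hU : Module.finrank ℝ U = q) (hV : Module.finrank ℝ V = q)
    (hgap : gap U V < 1 / (q : ℝ)) :
    gap V U ≤ (q : ℝ) * gap U V / (1 - (q : ℝ) * gap U V) := by
  classical
  have hδ0 : 0 ≤ gap U V := gap_nonneg U V
  have hq0 : q ≠ 0 := by
    rintro rfl
    rw [Nat.cast_zero, div_zero] at hgap
    exact absurd hgap (not_lt.2 hδ0)
  have hqpos : (0:ℝ) < q := Nat.cast_pos.2 (Nat.pos_of_ne_zero hq0)
  set δ := gap U V with hδ
  have hδq : (q:ℝ) * δ < 1 := by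
    rw [lt_div_iff₀ hqpos] at hgap
    linarith [hgap]
  have key : ∀ δ' : ℝ, δ < δ' → (q:ℝ) * δ' < 1 →
      gap V U ≤ (q:ℝ) * δ' / (1 - (q:ℝ) * δ') := by
    intro δ' hlt hq1
    have hδ'0 : 0 < δ' := lt_of_le_of_lt hδ0 hlt
    have hden : 0 < 1 - (q:ℝ) * δ' := by linarith
    obtain ⟨u, L, huU, hunorm, hLnorm, hrep⟩ := auerbach U hq0 hU
    -- choose nearby vectors in V
    have hVne : (V : Set E).Nonempty := ⟨0, V.zero_mem⟩
    have hchoose : ∀ i, ∃ v ∈ (V : Set E), dist (u i) v < δ' := by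
      intro i
      apply (infDist_lt_iff hVne).1
      exact lt_of_le_of_lt (infDist_le_gap (huU i) (hunorm i)) hlt
    choose v hvV hvd using hchoose
    -- the approximating linear map T : U → V
    let T : (U →ₗ[ℝ] V) :=
      { toFun := fun x => ⟨∑ i, L i x • v i, sum_mem fun i _ => V.smul_mem _ (hvV i)⟩
        map_add' := by
          intro x y
          apply Subtype.ext
          simp [_root_.map_add, add_smul, Finset.sum_add_distrib]
        map_smul' := by
          intro c x
          apply Subtype.ext
          simp [Finset.smul_sum, smul_smul] }
    have hT_apply : ∀ x : U, (T x : E) = ∑ i, L i x • v i := fun x => rfl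
    have hTdiff : ∀ x : U, ‖(T x : E) - x‖ ≤ (q:ℝ) * δ' * ‖x‖ := by
      intro x
      have hx : (x : E) = ∑ i, L i (x : E) • u i := hrep x x.2
      rw [hT_apply]
      calc ‖(∑ i, L i (x:E) • v i) - (x:E)‖
          = ‖∑ i, L i (x:E) • (v i - u i)‖ := by
            rw [show (∑ i, L i (x:E) • (v i - u i)) =
              (∑ i, L i (x:E) • v i) - ∑ i, L i (x:E) • u i by
                rw [← Finset.sum_sub_distrib]
                exact Finset.sum_congr rfl fun i _ => smul_sub _ _ _]
            rw [← hx]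
        _ ≤ ∑ i, ‖L i (x:E) • (v i - u i)‖ := norm_sum_le _ _
        _ ≤ ∑ i, ‖x‖ * δ' := by
            apply Finset.sum_le_sum
            intro i _
            rw [norm_smul, Real.norm_eq_abs]
            have h1 : |L i (x:E)| ≤ ‖x‖ := by
              calc |L i (x:E)| ≤ ‖L i‖ * ‖(x:E)‖ := (L i).le_opNorm _
                _ ≤ 1 * ‖x‖ := by
                    apply mul_le_mul_of_nonneg_right (hLnorm i) (norm_nonneg _)
                _ = ‖x‖ := one_mul _
            have h2 : ‖v i - u i‖ ≤ δ' := by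
              rw [← neg_sub, norm_neg, ← dist_eq_norm]
              exact (hvd i).le
            exact mul_le_mul h1 h2 (norm_nonneg _) (norm_nonneg _)
        _ = (q:ℝ) * δ' * ‖x‖ := by
            rw [Finset.sum_const, Finset.card_univ, Fintype.card_fin, nsmul_eq_mul]
            ring
    -- T is injective
    have hTinj : Function.Injective T := by
      rw [← LinearMap.ker_eq_bot]
      rw [Submodule.eq_bot_iff]
      intro x hx
      rw [LinearMap.mem_ker] at hx
      by_contra hx0
      have hxn : 0 < ‖x‖ := norm_pos_iff.2 hx0
      have := hTdiff x
      rw [hx] at this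
      simp only [Submodule.coe_zero, zero_sub, norm_neg] at this
      have hxE : ‖(x:E)‖ = ‖x‖ := rfl
      nlinarith
    -- T is surjective
    have hTsurj : Function.Surjective T := by
      have h1 : Module.finrank ℝ (LinearMap.range T) = q := by
        rw [LinearMap.finrank_range_of_inj hTinj, hU]
      rw [← LinearMap.range_eq_top]
      exact Submodule.eq_top_of_finrank_eq (by rw [h1, hV])
    -- conclude
    apply gap_le (by positivity)
    intro w hwV hwnorm
    obtain ⟨x, hx⟩ := hTsurj ⟨w, hwV⟩
    have hxval : (T x : E) = w := by rw [hx]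
    have hxn : ‖x‖ ≤ 1 / (1 - (q:ℝ) * δ') := by
      have h1 : ‖x‖ ≤ ‖(T x : E) - (x:E)‖ + ‖(T x : E)‖ := by
        calc ‖x‖ = ‖(T x : E) - ((T x : E) - (x:E))‖ := by
              show ‖(x:E)‖ = _
              rw [sub_sub_cancel]
          _ ≤ ‖(T x : E)‖ + ‖(T x : E) - (x:E)‖ := norm_sub_le _ _
          _ = ‖(T x : E) - (x:E)‖ + ‖(T x : E)‖ := add_comm _ _
      have h2 := hTdiff x
      rw [hxval, hwnorm] at h1
      rw [hxval] at h2
      rw [le_div_iff₀ hden]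
      nlinarith [norm_nonneg ((w : E) - (x:E))]
    calc infDist w (U : Set E) ≤ dist w (x : E) := infDist_le_dist_of_mem x.2
      _ = ‖(T x : E) - (x : E)‖ := by rw [dist_eq_norm, hxval]
      _ ≤ (q:ℝ) * δ' * ‖x‖ := hTdiff x
      _ ≤ (q:ℝ) * δ' * (1 / (1 - (q:ℝ) * δ')) := by
          apply mul_le_mul_of_nonneg_left hxn (by positivity)
      _ = (q:ℝ) * δ' / (1 - (q:ℝ) * δ') := by ring
  -- take the limit δ' → δ
  have hlim : Filter.Tendsto (fun n : ℕ => δ + (1/(q:ℝ) - δ) / (n + 2)) Filter.atTop (nhds δ) := by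
    have h1 : Filter.Tendsto (fun n : ℕ => ((n:ℝ) + 2)) Filter.atTop Filter.atTop := by
      apply Filter.tendsto_atTop_add_const_right
      exact tendsto_natCast_atTop_atTop
    have h2 : Filter.Tendsto (fun n : ℕ => (1/(q:ℝ) - δ) / ((n:ℝ) + 2)) Filter.atTop (nhds 0) :=
      Filter.Tendsto.div_atTop tendsto_const_nhds h1
    simpa using tendsto_const_nhds.add h2
  have hpos : 0 < 1/(q:ℝ) - δ := by
    rw [sub_pos]
    exact hgap
  have hδn : ∀ n : ℕ, δ < δ + (1/(q:ℝ) - δ) / (n + 2) := by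
    intro n
    have : (0:ℝ) < ((n:ℝ) + 2) := by positivity
    have := div_pos hpos this
    linarith
  have hδn1 : ∀ n : ℕ, (q:ℝ) * (δ + (1/(q:ℝ) - δ) / (n + 2)) < 1 := by
    intro n
    have hn2 : (1:ℝ) < (n:ℝ) + 2 := by
      have : (0:ℝ) ≤ (n:ℝ) := Nat.cast_nonneg n
      linarith
    have h3 : (1/(q:ℝ) - δ) / ((n:ℝ) + 2) < 1/(q:ℝ) - δ := by
      apply div_lt_self hpos hn2
    have h4 : δ + (1/(q:ℝ) - δ) / ((n:ℝ) + 2) < 1/(q:ℝ) := by linarith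
    calc (q:ℝ) * (δ + (1/(q:ℝ) - δ) / (n + 2)) < (q:ℝ) * (1/(q:ℝ)) :=
          mul_lt_mul_of_pos_left h4 hqpos
      _ = 1 := by field_simp
  have hflim : Filter.Tendsto
      (fun n : ℕ => (q:ℝ) * (δ + (1/(q:ℝ) - δ) / (n + 2)) /
        (1 - (q:ℝ) * (δ + (1/(q:ℝ) - δ) / (n + 2)))) Filter.atTop
      (nhds ((q:ℝ) * δ / (1 - (q:ℝ) * δ))) := by
    have hnum : Filter.Tendsto (fun n : ℕ => (q:ℝ) * (δ + (1/(q:ℝ) - δ) / (n + 2)))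
        Filter.atTop (nhds ((q:ℝ) * δ)) := tendsto_const_nhds.mul hlim
    have hden' : Filter.Tendsto (fun n : ℕ => 1 - (q:ℝ) * (δ + (1/(q:ℝ) - δ) / (n + 2)))
        Filter.atTop (nhds (1 - (q:ℝ) * δ)) := tendsto_const_nhds.sub hnum
    exact hnum.div hden' (by linarith : (0:ℝ) < 1 - (q:ℝ) * δ).ne'
  apply ge_of_tendsto hflim
  filter_upwards with n
  exact key _ (hδn n) (hδn1 n)
lemma gap_annih_le (U V : Submodule ℝ E) : gap (annih V) (annih U) ≤ gap U V := by
  apply gap_le (gap_nonneg U V)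
  intro φ hφ hφnorm
  -- the restriction of φ to U has norm ≤ gap U V
  let r : (U : Subspace ℝ E) →L[ℝ] ℝ := φ.comp U.subtypeL
  have hrn : ‖r‖ ≤ gap U V := by
    apply ContinuousLinearMap.opNorm_le_bound _ (gap_nonneg U V)
    intro x
    have h1 : |φ (x : E)| ≤ infDist (x : E) (V : Set E) := by
      apply my_le_infDist ⟨0, V.zero_mem⟩
      intro y hy
      have : φ ((x : E) - y) = φ (x : E) := by
        rw [_root_.map_sub, hφ y hy, sub_zero]
      calc |φ (x : E)| = |φ ((x : E) - y)| := by rw [this]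
        _ ≤ ‖φ‖ * ‖(x : E) - y‖ := (abs_le.2 ⟨neg_le_of_neg_le ?_, ?_⟩).trans_eq rfl
        _ = dist (x : E) y := by rw [hφnorm, one_mul, dist_eq_norm]
      · have := (φ.le_opNorm ((x:E) - y))
        rw [Real.norm_eq_abs] at this
        linarith [neg_abs_le (φ ((x:E) - y))]
      · have := (φ.le_opNorm ((x:E) - y))
        rw [Real.norm_eq_abs] at this
        linarith [le_abs_self (φ ((x:E) - y))]
    have h2 : infDist (x : E) (V : Set E) ≤ gap U V * ‖x‖ := infDist_le_gap_mul x.2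
    calc ‖r x‖ = |φ (x : E)| := by simp [r, Real.norm_eq_abs]
      _ ≤ gap U V * ‖x‖ := le_trans h1 h2
  obtain ⟨g, hgext, hgnorm⟩ := exists_extension_norm_eq (U : Subspace ℝ E) r
  have hχ : φ - g ∈ annih U := by
    intro x hx
    have := hgext ⟨x, hx⟩
    simp only [ContinuousLinearMap.sub_apply]
    rw [this]
    simp [r]
  calc infDist φ ((annih U : Submodule ℝ (E →L[ℝ] ℝ)) : Set (E →L[ℝ] ℝ))
      ≤ dist φ (φ - g) := infDist_le_dist_of_mem hχ
    _ = ‖g‖ := by rw [dist_eq_norm]; simp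
    _ ≤ gap U V := by rw [hgnorm]; exact hrn

lemma gap_le_gap_annih (U V : Submodule ℝ E) (hUc : IsClosed (U : Set E)) :
    gap V U ≤ gap (annih U) (annih V) := by
  apply gap_le (gap_nonneg _ _)
  intro w hwV hwnorm
  haveI : IsClosed (U : Set E) := hUc
  set d := infDist w (U : Set E) with hd
  have hd0 : 0 ≤ d := infDist_nonneg
  rcases eq_or_lt_of_le hd0 with heq | hdpos
  · rw [← heq]; exact gap_nonneg _ _
  -- the quotient map as a continuous linear map
  let Qc : E →L[ℝ] E ⧸ U := LinearMap.mkContinuous U.mkQ 1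
    (fun x => by simpa using Submodule.Quotient.norm_mk_le U x)
  have hQc : ‖Qc‖ ≤ 1 := LinearMap.mkContinuous_norm_le _ zero_le_one _
  have hQw : d ≤ ‖Qc w‖ := by
    apply le_of_forall_pos_le_add
    intro ε hε
    obtain ⟨m, hm, hmn⟩ := Submodule.Quotient.norm_mk_lt (Qc w) hε
    have hwm : w - m ∈ U := by
      rw [← Submodule.Quotient.eq]
      exact hm.symm
    calc d ≤ dist w (w - m) := infDist_le_dist_of_mem hwm
      _ = ‖m‖ := by rw [dist_eq_norm]; simp
      _ ≤ ‖Qc w‖ + ε := le_of_lt hmn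
  have hQwne : Qc w ≠ 0 := by
    intro h
    rw [h, norm_zero] at hQw
    linarith
  obtain ⟨ψ, hψnorm, hψval⟩ := exists_dual_vector ℝ (Qc w) (norm_ne_zero_iff.2 hQwne)
  let ℓ : E →L[ℝ] ℝ := ψ.comp Qc
  have hℓU : ℓ ∈ annih U := by
    intro x hx
    have : Qc x = 0 := by
      show U.mkQ x = 0
      rw [Submodule.mkQ_apply, Submodule.Quotient.mk_eq_zero]
      exact hx
    simp [ℓ, this]
  have hℓn : ‖ℓ‖ ≤ 1 := by
    calc ‖ℓ‖ ≤ ‖ψ‖ * ‖Qc‖ := ContinuousLinearMap.opNorm_comp_le _ _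
      _ ≤ 1 * 1 := mul_le_mul (le_of_eq hψnorm) hQc (ContinuousLinearMap.opNorm_nonneg Qc) zero_le_one
      _ = 1 := one_mul 1
  have hℓw : d ≤ ℓ w := by
    have : ℓ w = ‖Qc w‖ := hψval
    rw [this]
    exact hQw
  have h1 : d ≤ infDist ℓ ((annih V : Submodule ℝ (E →L[ℝ] ℝ)) : Set (E →L[ℝ] ℝ)) := by
    apply my_le_infDist ⟨0, (annih V).zero_mem⟩
    intro χ hχ
    have hχw : χ w = 0 := hχ w hwV
    calc d ≤ ℓ w := hℓw
      _ = (ℓ - χ) w := by simp [hχw]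
      _ ≤ ‖(ℓ - χ) w‖ := le_abs_self _
      _ ≤ ‖ℓ - χ‖ * ‖w‖ := (ℓ - χ).le_opNorm w
      _ = dist ℓ χ := by rw [hwnorm, mul_one, dist_eq_norm]
  calc d ≤ infDist ℓ ((annih V : Submodule ℝ (E →L[ℝ] ℝ)) : Set (E →L[ℝ] ℝ)) := h1
    _ ≤ gap (annih U) (annih V) * ‖ℓ‖ := infDist_le_gap_mul hℓU
    _ ≤ gap (annih U) (annih V) * 1 :=
        mul_le_mul_of_nonneg_left hℓn (gap_nonneg _ _)
    _ = gap (annih U) (annih V) := mul_one _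

end GapAux

theorem statement8
    {B : Type*} [NormedAddCommGroup B] [NormedSpace ℝ B] [CompleteSpace B]
    (q : ℕ) (U V : Submodule ℝ B)
    (h : (FiniteDimensional ℝ U ∧ FiniteDimensional ℝ V ∧
            Module.finrank ℝ U = q ∧ Module.finrank ℝ V = q) ∨
         (IsClosed (U : Set B) ∧ IsClosed (V : Set B) ∧ codim U = q ∧ codim V = q))
    (hgap : gap U V < 1 / (q : ℝ)) :
    gap V U ≤ (q : ℝ) * gap U V / (1 - (q : ℝ) * gap U V) := by
  have hδ0 : 0 ≤ gap U V := gap_nonneg U V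
  have hq0 : q ≠ 0 := by
    rintro rfl
    rw [Nat.cast_zero, div_zero] at hgap
    exact absurd hgap (not_lt.2 hδ0)
  have hqpos : (0:ℝ) < q := Nat.cast_pos.2 (Nat.pos_of_ne_zero hq0)
  rcases h with ⟨hUf, hVf, hU, hV⟩ | ⟨hUc, hVc, hU, hV⟩
  · exact gap_bound_fin q U V hU hV hgap
  · haveI : FiniteDimensional ℝ (annih U) := FiniteDimensional.of_finrank_pos
      (by rw [show Module.finrank ℝ (annih U) = q from hU]; exact Nat.pos_of_ne_zero hq0)
    haveI : FiniteDimensional ℝ (annih V) := FiniteDimensional.of_finrank_pos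
      (by rw [show Module.finrank ℝ (annih V) = q from hV]; exact Nat.pos_of_ne_zero hq0)
    have h1 : gap (annih V) (annih U) ≤ gap U V := gap_annih_le U V
    have h2 : gap (annih V) (annih U) < 1 / (q : ℝ) := lt_of_le_of_lt h1 hgap
    have h3 := gap_bound_fin q (annih V) (annih U) hV hU h2
    have h4 : gap V U ≤ gap (annih U) (annih V) := gap_le_gap_annih U V hUc
    have hδq : (q:ℝ) * gap U V < 1 := by
      rw [lt_div_iff₀ hqpos] at hgap
      linarith
    have ha0 : 0 ≤ gap (annih V) (annih U) := gap_nonneg _ _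
    have haq : (q:ℝ) * gap (annih V) (annih U) < 1 := by
      have := mul_le_mul_of_nonneg_left h1 (le_of_lt hqpos)
      linarith
    have h5 : (q:ℝ) * gap (annih V) (annih U) / (1 - (q:ℝ) * gap (annih V) (annih U)) ≤
        (q:ℝ) * gap U V / (1 - (q:ℝ) * gap U V) := by
      rw [div_le_div_iff₀ (by linarith) (by linarith)]
      nlinarith [mul_le_mul_of_nonneg_left h1 (le_of_lt hqpos)]
    linarith


end
end BanachMET
end

section
/- Let B be a real Banach space and q ∈ ℕ. There exists a constant C_q > 0 depending only on q such that for any A ∈ L(B), any q-dimensional subspace V ⊆ B, any inner product (·,·)_V on V whose norm ‖·‖_V satisfies (1/√q)|v| ≤ ‖v‖_V ≤ √q|v| and whose Lebesgue volume coincides with m_V, and any basis v_1, …, v_q of V consisting of |·|-unit vectors that is (·,·)_V-orthogonal, one has det(A | V) ≤ C_q · Π_{i=1}^q |A v_i|. -/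
open MeasureTheory Filter Metric Set
open scoped ENNReal NNReal Topology

namespace BanachMET

noncomputable section

variable {B B' : Type*} [NormedAddCommGroup B] [NormedSpace ℝ B]
  [NormedAddCommGroup B'] [NormedSpace ℝ B']

section AuxStatement12

lemma ballVol_pos' (q : ℕ) : 0 < ballVol q :=
  measure_closedBall_pos _ _ one_pos

lemma ballVol_ne_top' (q : ℕ) : ballVol q ≠ ⊤ :=
  measure_closedBall_lt_top.ne

variable [MeasurableSpace B] [BorelSpace B]

lemma inducedVolume_eq_aux (E : Submodule ℝ B) [h : FiniteDimensional ℝ E] :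
    inducedVolume E = (ballVol (Module.finrank ℝ E) /
        (Module.finBasis ℝ E).addHaar (Metric.closedBall (0 : E) 1)) •
      (Module.finBasis ℝ E).addHaar := by
  unfold inducedVolume
  rw [dif_pos h]

lemma addHaar_cball_ne_zero (E : Submodule ℝ B) [FiniteDimensional ℝ E] :
    (Module.finBasis ℝ E).addHaar (Metric.closedBall (0 : E) 1) ≠ 0 := by
  haveI : ProperSpace E := FiniteDimensional.proper ℝ E
  exact (measure_closedBall_pos _ _ one_pos).ne'

lemma addHaar_cball_ne_top (E : Submodule ℝ B) [FiniteDimensional ℝ E] :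
    (Module.finBasis ℝ E).addHaar (Metric.closedBall (0 : E) 1) ≠ ⊤ := by
  haveI : ProperSpace E := FiniteDimensional.proper ℝ E
  exact measure_closedBall_lt_top.ne

lemma inducedVolume_closedBall (E : Submodule ℝ B) [FiniteDimensional ℝ E] :
    inducedVolume E (Metric.closedBall (0 : E) 1) = ballVol (Module.finrank ℝ E) := by
  rw [inducedVolume_eq_aux E]
  simp only [Measure.smul_apply, smul_eq_mul]
  exact ENNReal.div_mul_cancel (addHaar_cball_ne_zero E) (addHaar_cball_ne_top E)

lemma IsInnerOn.zero_left {W : Submodule ℝ B} {p : B → B → ℝ} (hp : IsInnerOn W p)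
    {w : B} (hw : w ∈ W) : p 0 w = 0 := by
  have h := hp.smul_left 0 0 W.zero_mem w hw
  simpa using h

lemma IsInnerOn.sum_left {W : Submodule ℝ B} {p : B → B → ℝ} (hp : IsInnerOn W p)
    {ι : Type*} (s : Finset ι) (g : ι → B) (hg : ∀ i, g i ∈ W) {w : B} (hw : w ∈ W) :
    p (∑ i ∈ s, g i) w = ∑ i ∈ s, p (g i) w := by
  classical
  induction s using Finset.induction with
  | empty => simpa using hp.zero_left hw
  | insert a s hns ih =>
      rw [Finset.sum_insert hns, Finset.sum_insert hns,
        hp.add_left _ (hg a) _ (Submodule.sum_mem W fun i _ => hg i) w hw, ih]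

lemma IsInnerOn.expand {W : Submodule ℝ B} {p : B → B → ℝ} (hp : IsInnerOn W p)
    {q : ℕ} (v : Fin q → B) (hv : ∀ i, v i ∈ W)
    (horth : ∀ i j, i ≠ j → p (v i) (v j) = 0) (t : Fin q → ℝ) :
    p (∑ i, t i • v i) (∑ i, t i • v i) = ∑ i, t i ^ 2 * p (v i) (v i) := by
  classical
  have hX : (∑ i, t i • v i) ∈ W := Submodule.sum_mem W fun i _ => W.smul_mem _ (hv i)
  have hmem : ∀ i, t i • v i ∈ W := fun i => W.smul_mem _ (hv i)
  rw [hp.sum_left Finset.univ (fun i => t i • v i) hmem hX]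
  refine Finset.sum_congr rfl fun i _ => ?_
  rw [hp.smul_left (t i) (v i) (hv i) _ hX, hp.symm (v i) (hv i) _ hX,
    hp.sum_left Finset.univ (fun j => t j • v j) hmem (hv i)]
  have : ∀ j, p (t j • v j) (v i) = t j * p (v j) (v i) := fun j =>
    hp.smul_left (t j) (v j) (hv j) (v i) (hv i)
  rw [Finset.sum_congr rfl fun j _ => this j]
  rw [Finset.sum_eq_single i (fun j _ hji => by rw [horth j i hji, mul_zero]) (by simp)]
  ring

end AuxStatement12

set_option maxHeartbeats 1000000 in
theorem statement12
    {B : Type*} [NormedAddCommGroup B] [NormedSpace ℝ B] [CompleteSpace B]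
    [MeasurableSpace B] [BorelSpace B] (q : ℕ) :
    ∃ C : ℝ, 0 < C ∧
      ∀ (A : B →L[ℝ] B) (W : Submodule ℝ B), FiniteDimensional ℝ W →
        Module.finrank ℝ W = q →
      ∀ p : B → B → ℝ, IsInnerOn W p →
        (∀ v ∈ W, (Real.sqrt q)⁻¹ * ‖v‖ ≤ Real.sqrt (p v v) ∧
          Real.sqrt (p v v) ≤ Real.sqrt q * ‖v‖) →
        inducedVolume W {v : W | p (v : B) (v : B) ≤ 1} = ballVol q →
      ∀ v : Fin q → B, (∀ i, v i ∈ W) → (∀ i, ‖v i‖ = 1) →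
        (∀ i j, i ≠ j → p (v i) (v j) = 0) →
        Submodule.span ℝ (Set.range v) = W →
        detOn A W ≤ ENNReal.ofReal (C * ∏ i, ‖A (v i)‖) := by
  classical
  refine ⟨((q : ℝ) * q + 1) ^ q, by positivity, ?_⟩
  intro A W hFD hrk p hinner hcomp _hnorm v hvW hv1 horth hspan
  haveI := hFD
  by_cases hinj : Set.InjOn A (W : Set B)
  swap
  · unfold detOn
    rw [if_neg hinj]
    exact zero_le
  -- basic positivity facts
  have hvne : ∀ i, v i ≠ 0 := by
    intro i h
    have := hv1 i
    rw [h, norm_zero] at this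
    norm_num at this
  have hAvne : ∀ i, A (v i) ≠ 0 := by
    intro i h
    exact hvne i (hinj (hvW i) W.zero_mem (by simpa using h))
  have hAvpos : ∀ i, 0 < ‖A (v i)‖ := fun i => norm_pos_iff.2 (hAvne i)
  -- the set in `detOn`
  set F : Submodule ℝ B := W.map (A : B →ₗ[ℝ] B) with hF
  set S : Set F :=
    (Subtype.val) ⁻¹' (A '' ((Subtype.val : W → B) '' Metric.closedBall (0 : W) 1)) with hS
  have hdetOn : detOn A W = inducedVolume F S / ballVol q := by
    unfold detOn
    rw [if_pos hinj, hrk]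
  rcases Nat.eq_zero_or_pos q with hq0 | hqpos
  · -- trivial case q = 0
    subst hq0
    have hWbot : W = ⊥ := Submodule.finrank_eq_zero.mp hrk
    haveI : FiniteDimensional ℝ F := by
      rw [hF, hWbot, Submodule.map_bot]
      infer_instance
    have hFrk : Module.finrank ℝ F = 0 := by
      rw [hF, hWbot, Submodule.map_bot, finrank_bot]
    have hSsub : S ⊆ Metric.closedBall (0 : F) 1 := by
      intro y _
      have hy0 : y = 0 := by
        rcases y with ⟨yB, hyB⟩
        rcases hyB with ⟨x, hx, rfl⟩
        rw [hWbot] at hx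
        simp only [Submodule.mem_bot, SetLike.mem_coe] at hx
        subst hx
        simp [Subtype.ext_iff]
      rw [hy0]
      simp
    have hle : inducedVolume F S ≤ ballVol 0 := by
      calc inducedVolume F S ≤ inducedVolume F (Metric.closedBall (0 : F) 1) :=
            measure_mono hSsub
        _ = ballVol (Module.finrank ℝ F) := inducedVolume_closedBall F
        _ = ballVol 0 := by rw [hFrk]
    rw [hdetOn]
    have : inducedVolume F S / ballVol 0 ≤ 1 :=
      ENNReal.div_le_of_le_mul (by simpa using hle)
    refine this.trans ?_
    norm_num
  -- main case q > 0
  have hq : (0:ℝ) < q := by exact_mod_cast hqpos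
  -- basis of W from v
  set vW : Fin q → W := fun i => ⟨v i, hvW i⟩ with hvWdef
  have hval : (W.subtype : W → B) ∘ vW = v := rfl
  have hspanW : ⊤ ≤ Submodule.span ℝ (Set.range vW) := by
    have hmapeq : Submodule.map W.subtype (Submodule.span ℝ (Set.range vW))
        = Submodule.map W.subtype ⊤ := by
      rw [Submodule.map_span, Submodule.map_subtype_top, ← Set.range_comp, hval, hspan]
    exact (Submodule.map_injective_of_injective (Submodule.injective_subtype W) hmapeq).ge
  have hindW : LinearIndependent ℝ vW :=
    linearIndependent_of_top_le_span_of_card_eq_finrank hspanW (by simp [hrk])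
  set bW : Module.Basis (Fin q) ℝ W := Module.Basis.mk hindW hspanW with hbWdef
  have hbW : ∀ i, (bW i : B) = v i := fun i => by rw [hbWdef, Module.Basis.mk_apply]
  have hvind : LinearIndependent ℝ v := by
    have h := hindW.map' W.subtype W.ker_subtype
    rwa [hval] at h
  have hAvind : LinearIndependent ℝ (fun i => A (v i)) := by
    have hdis : Disjoint (Submodule.span ℝ (Set.range v))
        (LinearMap.ker (A : B →ₗ[ℝ] B)) := by
      rw [hspan, Submodule.disjoint_def]
      intro x hxW hxk
      have hx0 : A x = 0 := hxk
      exact hinj hxW W.zero_mem (by simpa using hx0)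
    exact hvind.map hdis
  -- basis of F from A v
  set wF : Fin q → F := fun i => ⟨A (v i), Submodule.mem_map_of_mem (hvW i)⟩ with hwFdef
  have hwval : (F.subtype : F → B) ∘ wF = fun i => A (v i) := rfl
  have hindF : LinearIndependent ℝ wF :=
    LinearIndependent.of_comp F.subtype (by rw [hwval]; exact hAvind)
  have hspanF : ⊤ ≤ Submodule.span ℝ (Set.range wF) := by
    have hmapeq : Submodule.map F.subtype (Submodule.span ℝ (Set.range wF))
        = Submodule.map F.subtype ⊤ := by
      rw [Submodule.map_span, Submodule.map_subtype_top, ← Set.range_comp, hwval]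
      rw [hF, ← hspan, Submodule.map_span]
      congr 1
      rw [← Set.range_comp]
      rfl
    exact (Submodule.map_injective_of_injective (Submodule.injective_subtype F) hmapeq).ge
  set bF : Module.Basis (Fin q) ℝ F := Module.Basis.mk hindF hspanF with hbFdef
  have hbF : ∀ i, bF i = wF i := fun i => by rw [hbFdef, Module.Basis.mk_apply]
  haveI hFDF : FiniteDimensional ℝ F := Module.Finite.of_basis bF
  have hrkF : Module.finrank ℝ F = q := by
    rw [Module.finrank_eq_card_basis bF, Fintype.card_fin]
  -- the diagonal comparison map T
  set c : Fin q → ℝ := fun i => ((q : ℝ) * q * ‖A (v i)‖)⁻¹ with hcdef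
  have hcpos : ∀ i, 0 < c i := fun i => by
    have := hAvpos i
    rw [hcdef]
    positivity
  set T : F →ₗ[ℝ] F := bF.constr ℝ (fun i => c i • bF i) with hTdef
  have hTb : ∀ i, T (bF i) = c i • bF i := fun i => by
    rw [hTdef, Module.Basis.constr_basis]
  have hTmat : LinearMap.toMatrix bF bF T = Matrix.diagonal c := by
    ext i j
    rw [LinearMap.toMatrix_apply, hTb j, _root_.map_smul, bF.repr_self]
    rcases eq_or_ne i j with h | h
    · subst h
      simp [Matrix.diagonal]
    · simp [Matrix.diagonal, h, Finsupp.single_apply, Ne.symm h]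
  have hdetT : LinearMap.det T = ∏ i, c i := by
    rw [← LinearMap.det_toMatrix bF, hTmat, Matrix.det_diagonal]
  have hdetT_ne : LinearMap.det T ≠ 0 := by
    rw [hdetT]
    exact Finset.prod_ne_zero_iff.mpr fun i _ => (hcpos i).ne'
  -- subset claim
  have hSsub : S ⊆ T ⁻¹' Metric.closedBall (0 : F) 1 := by
    intro y hy
    simp only [hS, Set.mem_preimage, Set.mem_image] at hy
    obtain ⟨bB, ⟨x, hx, rfl⟩, hAx⟩ := hy
    set t : Fin q → ℝ := fun i => bW.repr x i with htdef
    have hxsum : (x : B) = ∑ i, t i • v i := by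
      conv_lhs => rw [← bW.sum_repr x]
      rw [AddSubmonoidClass.coe_finset_sum]
      exact Finset.sum_congr rfl fun i _ => by rw [SetLike.val_smul, hbW]
    have hxnorm : ‖(x : B)‖ ≤ 1 := by
      have h := mem_closedBall_zero_iff.mp hx
      simpa using h
    have hpxx_nonneg : 0 ≤ p ↑x ↑x := by
      rcases eq_or_ne (x : B) 0 with h | h
      · rw [h]
        exact le_of_eq (hinner.zero_left W.zero_mem).symm
      · exact (hinner.posdef ↑x x.2 h).le
    have hpxx : p ↑x ↑x ≤ q := by
      have h2 := (hcomp ↑x x.2).2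
      calc p ↑x ↑x = Real.sqrt (p ↑x ↑x) ^ 2 := (Real.sq_sqrt hpxx_nonneg).symm
        _ ≤ (Real.sqrt q * ‖(x : B)‖) ^ 2 := by
            apply pow_le_pow_left₀ (Real.sqrt_nonneg _) h2
        _ = q * ‖(x : B)‖ ^ 2 := by
            rw [mul_pow, Real.sq_sqrt (by positivity)]
        _ ≤ q * 1 := by
            have h1 : ‖(x : B)‖ ^ 2 ≤ 1 := by nlinarith [norm_nonneg (x : B), hxnorm]
            exact mul_le_mul_of_nonneg_left h1 (by positivity)
        _ = q := mul_one _
    have hexp : p ↑x ↑x = ∑ i, t i ^ 2 * p (v i) (v i) := by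
      rw [hxsum]
      exact hinner.expand v hvW horth t
    have hlow : ∀ i, (q : ℝ)⁻¹ ≤ p (v i) (v i) := by
      intro i
      have h1 := (hcomp (v i) (hvW i)).1
      rw [hv1 i, mul_one] at h1
      have hnn : 0 ≤ p (v i) (v i) := (hinner.posdef _ (hvW i) (hvne i)).le
      have h2 := pow_le_pow_left₀ (by positivity) h1 2
      rw [Real.sq_sqrt hnn] at h2
      calc (q : ℝ)⁻¹ = (Real.sqrt (q : ℝ))⁻¹ ^ 2 := by
            rw [← Real.sqrt_inv, Real.sq_sqrt (by positivity)]
        _ ≤ _ := h2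
    have htbound : ∀ i, |t i| ≤ q := by
      intro i
      have hterm : t i ^ 2 * (q : ℝ)⁻¹ ≤ q := by
        calc t i ^ 2 * (q : ℝ)⁻¹ ≤ t i ^ 2 * p (v i) (v i) :=
              mul_le_mul_of_nonneg_left (hlow i) (sq_nonneg _)
          _ ≤ ∑ j, t j ^ 2 * p (v j) (v j) := by
              refine Finset.single_le_sum (f := fun j => t j ^ 2 * p (v j) (v j)) (fun j _ => ?_) (Finset.mem_univ i)
              exact mul_nonneg (sq_nonneg _) (le_trans (by positivity) (hlow j))
          _ = p ↑x ↑x := hexp.symm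
          _ ≤ q := hpxx
      have hsq : t i ^ 2 ≤ (q : ℝ) ^ 2 := by
        have h3 := mul_le_mul_of_nonneg_right hterm hq.le
        rw [mul_assoc, inv_mul_cancel₀ hq.ne', mul_one] at h3
        nlinarith [h3]
      calc |t i| = Real.sqrt (t i ^ 2) := (Real.sqrt_sq_eq_abs _).symm
        _ ≤ Real.sqrt ((q : ℝ) ^ 2) := Real.sqrt_le_sqrt hsq
        _ = q := Real.sqrt_sq (by positivity)
    have hysum : y = ∑ i, t i • wF i := by
      apply Subtype.ext
      have hco : (↑(∑ i, t i • wF i) : B) = ∑ i, t i • A (v i) := by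
        rw [AddSubmonoidClass.coe_finset_sum]
        exact Finset.sum_congr rfl fun i _ => by rw [SetLike.val_smul, hwFdef]
      rw [hco, ← hAx, hxsum, map_sum]
      exact Finset.sum_congr rfl fun i _ => by rw [_root_.map_smul]
    have hTy : T y = ∑ i, (t i * c i) • bF i := by
      rw [hysum, map_sum]
      refine Finset.sum_congr rfl fun i _ => ?_
      rw [← hbF i, _root_.map_smul, hTb i, smul_smul]
    have hTynorm : ‖T y‖ ≤ 1 := by
      rw [hTy]
      have hbFnorm : ∀ i, ‖bF i‖ = ‖A (v i)‖ := fun i => by rw [hbF i]; rfl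
      calc ‖∑ i, (t i * c i) • bF i‖ ≤ ∑ i, ‖(t i * c i) • bF i‖ := norm_sum_le _ _
        _ ≤ ∑ _i : Fin q, (q : ℝ)⁻¹ := by
            refine Finset.sum_le_sum fun i _ => ?_
            rw [norm_smul, Real.norm_eq_abs, abs_mul, hbFnorm i, abs_of_pos (hcpos i)]
            have hc : c i * ‖A (v i)‖ = ((q : ℝ) * q)⁻¹ := by
              rw [hcdef]
              field_simp
              exact div_self (hAvpos i).ne'
            calc |t i| * c i * ‖A (v i)‖ = |t i| * (c i * ‖A (v i)‖) := mul_assoc _ _ _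
              _ = |t i| * ((q : ℝ) * q)⁻¹ := by rw [hc]
              _ ≤ q * ((q : ℝ) * q)⁻¹ :=
                  mul_le_mul_of_nonneg_right (htbound i) (by positivity)
              _ = (q : ℝ)⁻¹ := by field_simp
        _ = q * (q : ℝ)⁻¹ := by
            rw [Finset.sum_const, Finset.card_univ, Fintype.card_fin, nsmul_eq_mul]
        _ = 1 := mul_inv_cancel₀ hq.ne'
    simp only [Set.mem_preimage]
    exact mem_closedBall_zero_iff.mpr hTynorm
  -- measure estimate
  have hmeas : inducedVolume F S ≤
      ENNReal.ofReal (∏ i, ((q : ℝ) * q * ‖A (v i)‖)) * ballVol q := by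
    calc inducedVolume F S ≤ inducedVolume F (T ⁻¹' Metric.closedBall 0 1) :=
          measure_mono hSsub
      _ = (ballVol q / (Module.finBasis ℝ F).addHaar (Metric.closedBall (0 : F) 1)) *
          ((Module.finBasis ℝ F).addHaar (T ⁻¹' Metric.closedBall 0 1)) := by
          have hbv : ballVol (Module.finrank ℝ ↥F) = ballVol q := by rw [hrkF]
          rw [inducedVolume_eq_aux F, hbv]
          rfl
      _ = (ballVol q / (Module.finBasis ℝ F).addHaar (Metric.closedBall (0 : F) 1)) *
          (ENNReal.ofReal |(LinearMap.det T)⁻¹| *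
            (Module.finBasis ℝ F).addHaar (Metric.closedBall (0 : F) 1)) := by
          rw [MeasureTheory.Measure.addHaar_preimage_linearMap _ hdetT_ne]
      _ = ENNReal.ofReal |(LinearMap.det T)⁻¹| *
          ((ballVol q / (Module.finBasis ℝ F).addHaar (Metric.closedBall (0 : F) 1)) *
            (Module.finBasis ℝ F).addHaar (Metric.closedBall (0 : F) 1)) := by
          ring
      _ = ENNReal.ofReal |(LinearMap.det T)⁻¹| * ballVol q := by
          rw [ENNReal.div_mul_cancel (addHaar_cball_ne_zero F) (addHaar_cball_ne_top F)]
      _ = ENNReal.ofReal (∏ i, ((q : ℝ) * q * ‖A (v i)‖)) * ballVol q := by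
          congr 2
          rw [hdetT, ← Finset.prod_inv_distrib]
          have hprod : ∀ i, (c i)⁻¹ = (q : ℝ) * q * ‖A (v i)‖ := fun i => by
            rw [hcdef, inv_inv]
          rw [Finset.prod_congr rfl fun i _ => hprod i]
          exact abs_of_pos (Finset.prod_pos fun i _ => mul_pos (mul_pos hq hq) (hAvpos i))
  rw [hdetOn, ENNReal.div_le_iff_le_mul (Or.inl (ballVol_pos' q).ne')
    (Or.inl (ballVol_ne_top' q))]
  refine hmeas.trans (mul_le_mul_left (ENNReal.ofReal_le_ofReal ?_) _)
  calc ∏ i, ((q : ℝ) * q * ‖A (v i)‖)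
      = (∏ _i : Fin q, ((q : ℝ) * q)) * ∏ i, ‖A (v i)‖ := by
        rw [← Finset.prod_mul_distrib]
    _ = ((q : ℝ) * q) ^ q * ∏ i, ‖A (v i)‖ := by
        rw [Finset.prod_const, Finset.card_univ, Fintype.card_fin]
    _ ≤ ((q : ℝ) * q + 1) ^ q * ∏ i, ‖A (v i)‖ := by
        refine mul_le_mul_of_nonneg_right (pow_le_pow_left₀ (by positivity) (by linarith) q) ?_
        exact Finset.prod_nonneg fun i _ => norm_nonneg _

end
end BanachMET
end

section
/- Let B be a real Banach space and q ∈ ℕ. There exists a constant c_q > 0 depending only on q such that for any A ∈ L(B), any q-dimensional subspace E ⊆ B, and any v ∈ E with v ≠ 0, one has (|A v| / |v|) · ‖A|_E‖^{q−1} ≥ c_q · det(A | E), where ‖A|_E‖ is the operator norm of the restriction of A to E. -/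
open MeasureTheory Filter Metric Set
open scoped ENNReal NNReal Topology

namespace BanachMET

noncomputable section

variable {B B' : Type*} [NormedAddCommGroup B] [NormedSpace ℝ B]
  [NormedAddCommGroup B'] [NormedSpace ℝ B']

private lemma det_prodMap_aux {M N : Type*} [AddCommGroup M] [Module ℝ M]
    [AddCommGroup N] [Module ℝ N] [FiniteDimensional ℝ M] [FiniteDimensional ℝ N]
    (f : M →ₗ[ℝ] M) (g : N →ₗ[ℝ] N) :
    LinearMap.det (f.prodMap g) = LinearMap.det f * LinearMap.det g := by
  classical
  let b₁ := Module.finBasis ℝ M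
  let b₂ := Module.finBasis ℝ N
  rw [← LinearMap.det_toMatrix (b₁.prod b₂), LinearMap.toMatrix_prodMap,
    Matrix.det_fromBlocks_zero₁₂, LinearMap.det_toMatrix, LinearMap.det_toMatrix]

/-- Core geometric estimate: in a finite dimensional normed space `F`, the addHaar
measure of a slab of "thickness" `‖u‖` in the direction `u` and cross section a ball
of radius `2N` in a complementary hyperplane `H` is at most
`2‖u‖(4N)^(dim H)` times the measure of the unit ball. -/
private lemma slab_measure_le
    {F : Type*} [NormedAddCommGroup F] [NormedSpace ℝ F] [MeasurableSpace F] [BorelSpace F]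
    [FiniteDimensional ℝ F] (μ : Measure F) [μ.IsAddHaarMeasure]
    (u : F) (H : Submodule ℝ F) (hu : u ∉ H)
    (hrank : Module.finrank ℝ F = Module.finrank ℝ H + 1)
    {N : ℝ} (huN : ‖u‖ ≤ N) :
    μ {x : F | ∃ a : ℝ, |a| ≤ 1 ∧ ∃ z ∈ H, ‖z‖ ≤ 2 * N ∧ x = a • u + z} ≤
      ENNReal.ofReal (2 * ‖u‖ * (4 * N) ^ (Module.finrank ℝ H)) *
        μ (Metric.closedBall 0 1) := by
  classical
  have hu0 : u ≠ 0 := fun h => hu (h ▸ H.zero_mem)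
  have hs : (0 : ℝ) < ‖u‖ := norm_pos_iff.2 hu0
  have hN : (0 : ℝ) < N := lt_of_lt_of_le hs huN
  set s : ℝ := ‖u‖ with hsdef
  set α : ℝ := 2 * s with hαdef
  set β : ℝ := 4 * N with hβdef
  have hα : (0 : ℝ) < α := by positivity
  have hβ : (0 : ℝ) < β := by positivity
  -- `span {u}` and `H` are complementary
  have hmemspan : u ∈ Submodule.span ℝ {u} := Submodule.mem_span_singleton_self u
  have hdisj : Disjoint (Submodule.span ℝ {u}) H := by
    rw [Submodule.disjoint_def]
    intro x hx hxH
    rcases Submodule.mem_span_singleton.1 hx with ⟨c, rfl⟩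
    rcases eq_or_ne c 0 with hc | hc
    · simp [hc]
    · exact absurd (by simpa [smul_smul, inv_mul_cancel₀ hc] using H.smul_mem c⁻¹ hxH) hu
  have hsup : Submodule.span ℝ {u} ⊔ H = ⊤ := by
    apply Submodule.eq_top_of_finrank_eq
    have hle : H < Submodule.span ℝ {u} ⊔ H := by
      refine lt_of_le_of_ne le_sup_right (fun h => hu ?_)
      have : u ∈ Submodule.span ℝ {u} ⊔ H := le_sup_left (α := Submodule ℝ F) hmemspan
      rwa [← h] at this
    have h1 : Module.finrank ℝ H < Module.finrank ℝ ↥(Submodule.span ℝ {u} ⊔ H) :=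
      Submodule.finrank_lt_finrank_of_lt hle
    have h2 : Module.finrank ℝ ↥(Submodule.span ℝ {u} ⊔ H) ≤ Module.finrank ℝ F :=
      Submodule.finrank_le _
    omega
  have hcompl : IsCompl (Submodule.span ℝ {u}) H :=
    ⟨hdisj, codisjoint_iff.2 hsup⟩
  -- the linear equivalence `e : ℝ × H ≃ F`, `(a, z) ↦ a • u + z`
  let e1 : ℝ ≃ₗ[ℝ] Submodule.span ℝ {u} := LinearEquiv.toSpanNonzeroSingleton ℝ F u hu0
  let e : (ℝ × H) ≃ₗ[ℝ] F :=
    (e1.prodCongr (LinearEquiv.refl ℝ H)).trans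
      (Submodule.prodEquivOfIsCompl (Submodule.span ℝ {u}) H hcompl)
  have he : ∀ (a : ℝ) (z : H), e (a, z) = a • u + (z : F) := by
    intro a z
    simp only [e, LinearEquiv.trans_apply, LinearEquiv.prodCongr_apply,
      Submodule.coe_prodEquivOfIsCompl']
    congr 1
  -- the dilation `T`
  let D : (ℝ × H) →ₗ[ℝ] (ℝ × H) :=
    (α • (LinearMap.id : ℝ →ₗ[ℝ] ℝ)).prodMap (β • (LinearMap.id : H →ₗ[ℝ] H))
  let T : F →ₗ[ℝ] F := (e : (ℝ × H) →ₗ[ℝ] F) ∘ₗ D ∘ₗ (e.symm : F →ₗ[ℝ] (ℝ × H))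
  have hdetT : LinearMap.det T = α * β ^ (Module.finrank ℝ H) := by
    have h1 : LinearMap.det T = LinearMap.det D := LinearMap.det_conj D e
    rw [h1, det_prodMap_aux, LinearMap.det_smul, LinearMap.det_smul,
      LinearMap.det_id, LinearMap.det_id, Module.finrank_self]
    ring
  -- small set inside the unit ball
  set small : Set F :=
    {x : F | ∃ a : ℝ, |a| ≤ α⁻¹ ∧ ∃ z ∈ H, ‖z‖ ≤ 2⁻¹ ∧ x = a • u + z} with hsmalldef
  have hsmall_sub : small ⊆ Metric.closedBall 0 1 := by
    rintro x ⟨a, ha, z, hz, hznorm, rfl⟩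
    rw [Metric.mem_closedBall, dist_zero_right]
    have h1 : ‖a • u + z‖ ≤ ‖a • u‖ + ‖z‖ := norm_add_le _ _
    have h2 : ‖a • u‖ = |a| * s := by rw [norm_smul, Real.norm_eq_abs]
    have h3 : |a| * s ≤ α⁻¹ * s := by
      apply mul_le_mul_of_nonneg_right ha hs.le
    have h4 : α⁻¹ * s = 2⁻¹ := by
      rw [hαdef]; field_simp
    nlinarith
  -- the big slab is contained in `T '' small`
  have hbig_sub : {x : F | ∃ a : ℝ, |a| ≤ 1 ∧ ∃ z ∈ H, ‖z‖ ≤ 2 * N ∧ x = a • u + z}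
      ⊆ T '' small := by
    rintro x ⟨a, ha, z, hz, hznorm, rfl⟩
    refine ⟨(α⁻¹ * a) • u + ((β⁻¹ • ⟨z, hz⟩ : H) : F), ?_, ?_⟩
    · refine ⟨α⁻¹ * a, ?_, ((β⁻¹ • ⟨z, hz⟩ : H) : F), Submodule.coe_mem _, ?_, rfl⟩
      · rw [abs_mul, abs_of_nonneg (inv_nonneg.2 hα.le)]
        calc α⁻¹ * |a| ≤ α⁻¹ * 1 := by
              apply mul_le_mul_of_nonneg_left ha (inv_nonneg.2 hα.le)
        _ = α⁻¹ := mul_one _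
      · have : ‖((β⁻¹ • (⟨z, hz⟩ : H) : H) : F)‖ = β⁻¹ * ‖z‖ := by
          rw [Submodule.coe_smul]
          rw [norm_smul, Real.norm_eq_abs, abs_of_nonneg (inv_nonneg.2 hβ.le)]
        rw [this]
        calc β⁻¹ * ‖z‖ ≤ β⁻¹ * (2 * N) :=
              mul_le_mul_of_nonneg_left hznorm (inv_nonneg.2 hβ.le)
        _ = 2⁻¹ := by rw [hβdef]; field_simp; ring
    · have hx0 : ((α⁻¹ * a) • u + ((β⁻¹ • ⟨z, hz⟩ : H) : F)) = e (α⁻¹ * a, β⁻¹ • ⟨z, hz⟩) :=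
        (he _ _).symm
      rw [hx0]
      show e (D (e.symm (e _))) = _
      rw [LinearEquiv.symm_apply_apply]
      have hD : D (α⁻¹ * a, β⁻¹ • (⟨z, hz⟩ : H)) = (a, (⟨z, hz⟩ : H)) := by
        simp only [D, LinearMap.prodMap_apply, Prod.mk.injEq, LinearMap.smul_apply,
          LinearMap.id_apply, smul_smul]
        constructor
        · rw [smul_eq_mul, ← mul_assoc, mul_inv_cancel₀ hα.ne', one_mul]
        · rw [mul_inv_cancel₀ hβ.ne', one_smul]
      rw [hD, he]
  -- put everything together
  calc μ {x : F | ∃ a : ℝ, |a| ≤ 1 ∧ ∃ z ∈ H, ‖z‖ ≤ 2 * N ∧ x = a • u + z}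
      ≤ μ (T '' small) := measure_mono hbig_sub
    _ = ENNReal.ofReal |LinearMap.det T| * μ small := μ.addHaar_image_linearMap T small
    _ ≤ ENNReal.ofReal (2 * s * β ^ (Module.finrank ℝ H)) * μ (Metric.closedBall 0 1) := by
        apply mul_le_mul'
        · apply ENNReal.ofReal_le_ofReal
          rw [hdetT, abs_of_nonneg (by positivity)]
        · exact measure_mono hsmall_sub

theorem statement14
    {B : Type*} [NormedAddCommGroup B] [NormedSpace ℝ B] [CompleteSpace B]
    [MeasurableSpace B] [BorelSpace B] (q : ℕ) :
    ∃ c : ℝ, 0 < c ∧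
      ∀ (A : B →L[ℝ] B) (E : Submodule ℝ B), FiniteDimensional ℝ E →
        Module.finrank ℝ E = q → ∀ v ∈ E, v ≠ 0 →
        ENNReal.ofReal c * detOn A E ≤
          ENNReal.ofReal ((‖A v‖ / ‖v‖) * ‖A.comp E.subtypeL‖ ^ (q - 1)) := by
  classical
  refine ⟨(2 * 4 ^ (q - 1) : ℝ)⁻¹, by positivity, ?_⟩
  intro A E hE hq v hv hv0
  by_cases hinj : Set.InjOn A (E : Set B)
  swap
  · have hd : detOn A E = 0 := by
      unfold detOn
      rw [if_neg hinj]
    rw [hd, mul_zero]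
    exact zero_le
  -- injective case
  haveI := hE
  set N := ‖A.comp E.subtypeL‖ with hNdef
  have hvnorm : (0:ℝ) < ‖v‖ := norm_pos_iff.2 hv0
  have hAv : A v ≠ 0 := by
    intro h
    exact hv0 (hinj hv E.zero_mem (by simpa using h))
  have hAvnorm : (0:ℝ) < ‖A v‖ := norm_pos_iff.2 hAv
  set s := ‖A v‖ / ‖v‖ with hsdef
  have hs : (0:ℝ) < s := div_pos hAvnorm hvnorm
  have hbound : ∀ w, w ∈ E → ‖A w‖ ≤ N * ‖w‖ := by
    intro w hw
    have h1 : A w = (A.comp E.subtypeL) ⟨w, hw⟩ := rfl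
    rw [h1]
    exact (A.comp E.subtypeL).le_opNorm _
  have hsN : s ≤ N := by
    rw [hsdef, div_le_iff₀ hvnorm]
    exact hbound v hv
  have hN : (0:ℝ) < N := lt_of_lt_of_le hs hsN
  have hq1 : 1 ≤ q := by
    haveI : Nontrivial E := nontrivial_of_ne ⟨v, hv⟩ 0 (by simp [hv0])
    have := Module.finrank_pos (R := ℝ) (M := E)
    omega
  -- the image subspace F and its dimension
  have hmapeq : ∀ (p : Submodule ℝ B), p.map (A : B →ₗ[ℝ] B) = p.map (A : B →ₗ[ℝ] B) := by
    intro p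
    ext x
    simp [Submodule.mem_map]
  haveI hFfin : FiniteDimensional ℝ ↥(E.map (A : B →ₗ[ℝ] B)) := by
    rw [← hmapeq E]; infer_instance
  have hginj : Function.Injective ((A : B →ₗ[ℝ] B).domRestrict E) := by
    intro x y hxy
    exact Subtype.ext (hinj x.2 y.2 hxy)
  have hrankF : Module.finrank ℝ ↥(E.map (A : B →ₗ[ℝ] B)) = q := by
    rw [← hmapeq E, ← LinearMap.range_domRestrict,
      LinearMap.finrank_range_of_inj hginj, hq]
  -- dual functional
  obtain ⟨m, hm1, hm2'⟩ := exists_dual_vector ℝ v (norm_ne_zero_iff.2 hv0)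
  have hm2 : m v = ‖v‖ := by exact_mod_cast hm2'
  set E' : Submodule ℝ B := E ⊓ LinearMap.ker (m : B →ₗ[ℝ] ℝ) with hE'def
  have hE'le : E' ≤ E := inf_le_left
  haveI : FiniteDimensional ℝ E' := Submodule.finiteDimensional_of_le hE'le
  -- rank of E'
  have hE'rank : Module.finrank ℝ E' = q - 1 := by
    set mE : E →ₗ[ℝ] ℝ := (m : B →ₗ[ℝ] ℝ).domRestrict E with hmEdef
    have hmEsurj : LinearMap.range mE = ⊤ := by
      rw [eq_top_iff]
      rintro r -
      refine ⟨(r / ‖v‖) • ⟨v, hv⟩, ?_⟩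
      show m ((r / ‖v‖) • v) = r
      rw [_root_.map_smul, hm2, smul_eq_mul]
      field_simp
    have h1 := LinearMap.finrank_range_add_finrank_ker mE
    rw [hmEsurj, finrank_top, Module.finrank_self, hq] at h1
    have hE'eq : E'.comap E.subtype = LinearMap.ker mE := by
      ext x
      simp only [Submodule.mem_comap, hE'def, Submodule.mem_inf, LinearMap.mem_ker]
      constructor
      · rintro ⟨-, h⟩; exact h
      · intro h; exact ⟨x.2, h⟩
    have h2 := (Submodule.comapSubtypeEquivOfLe hE'le).finrank_eq
    rw [hE'eq] at h2
    omega
  -- the image hyperplane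
  set HB : Submodule ℝ B := E'.map (A : B →ₗ[ℝ] B) with hHBdef
  have hHBle : HB ≤ E.map (A : B →ₗ[ℝ] B) := Submodule.map_mono hE'le
  have hHBrank : Module.finrank ℝ HB = q - 1 := by
    have hg'inj : Function.Injective ((A : B →ₗ[ℝ] B).domRestrict E') := by
      intro x y hxy
      exact Subtype.ext (hinj (hE'le x.2) (hE'le y.2) hxy)
    rw [hHBdef, ← hmapeq E', ← LinearMap.range_domRestrict,
      LinearMap.finrank_range_of_inj hg'inj, hE'rank]
  -- the vector u
  have huB_mem : A (‖v‖⁻¹ • v) ∈ E.map (A : B →ₗ[ℝ] B) := Submodule.mem_map_of_mem (E.smul_mem _ hv)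
  set uF : ↥(E.map (A : B →ₗ[ℝ] B)) := ⟨A (‖v‖⁻¹ • v), huB_mem⟩ with huFdef
  have huFnorm : ‖uF‖ = s := by
    show ‖A (‖v‖⁻¹ • v)‖ = s
    rw [_root_.map_smul, norm_smul, Real.norm_eq_abs, abs_of_nonneg (inv_nonneg.2 hvnorm.le),
      hsdef, div_eq_inv_mul]
  set HF : Submodule ℝ ↥(E.map (A : B →ₗ[ℝ] B)) := HB.comap (E.map (A : B →ₗ[ℝ] B)).subtype with hHFdef
  have huFnot : uF ∉ HF := by
    intro hmem
    have hmem' : ((E.map (A : B →ₗ[ℝ] B)).subtype uF) ∈ HB := Submodule.mem_comap.mp hmem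
    obtain ⟨w, hw, hweq⟩ := hmem'
    have hwE : w ∈ E := hE'le hw
    have hwv : w = ‖v‖⁻¹ • v := hinj hwE (E.smul_mem _ hv) hweq
    have h0 : m w = 0 :=
      LinearMap.mem_ker.mp ((inf_le_right : E ⊓ LinearMap.ker (m : B →ₗ[ℝ] ℝ) ≤ LinearMap.ker (m : B →ₗ[ℝ] ℝ)) hw)
    rw [hwv, _root_.map_smul, hm2, smul_eq_mul, inv_mul_cancel₀ hvnorm.ne'] at h0
    exact one_ne_zero h0
  have hHFrank : Module.finrank ℝ HF = q - 1 := by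
    have h2 := (Submodule.comapSubtypeEquivOfLe hHBle).finrank_eq
    rw [hHFdef]
    rw [h2, hHBrank]
  have hrankF1 : Module.finrank ℝ ↥(E.map (A : B →ₗ[ℝ] B)) = Module.finrank ℝ HF + 1 := by
    rw [hrankF, hHFrank]; omega
  -- the image of the unit ball is contained in a slab
  set μ := (Module.finBasis ℝ ↥(E.map (A : B →ₗ[ℝ] B))).addHaar with hμdef
  set K : Set ↥(E.map (A : B →ₗ[ℝ] B)) :=
    (Subtype.val ⁻¹' (A '' ((Subtype.val : E → B) '' Metric.closedBall (0:E) 1))) with hKdef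
  have hKsub : K ⊆ {x : ↥(E.map (A : B →ₗ[ℝ] B)) | ∃ a : ℝ, |a| ≤ 1 ∧
      ∃ z ∈ HF, ‖z‖ ≤ 2 * N ∧ x = a • uF + z} := by
    rintro x hx
    rw [hKdef, Set.mem_preimage] at hx
    obtain ⟨y0, hy0, hxy⟩ := hx
    obtain ⟨y, hy, rfl⟩ := hy0
    have hynorm : ‖(y : B)‖ ≤ 1 := by
      have h := mem_closedBall_zero_iff.1 hy
      simpa using h
    set a := m (y : B) with hadef
    have ha : |a| ≤ 1 := by
      calc |a| = ‖m (y : B)‖ := (Real.norm_eq_abs _).symm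
        _ ≤ ‖m‖ * ‖(y : B)‖ := m.le_opNorm _
        _ ≤ 1 := by rw [hm1, one_mul]; exact hynorm
    set y' := (y : B) - a • (‖v‖⁻¹ • v) with hy'def
    have hy'E : y' ∈ E := E.sub_mem y.2 (E.smul_mem _ (E.smul_mem _ hv))
    have hy'ker : m y' = 0 := by
      rw [hy'def, map_sub, _root_.map_smul, _root_.map_smul, hm2]
      simp only [smul_eq_mul]
      field_simp
      simp [hadef]
    have hunit : ‖a • (‖v‖⁻¹ • v)‖ = |a| := by
      rw [norm_smul, norm_smul, Real.norm_eq_abs, Real.norm_eq_abs,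
        abs_of_nonneg (inv_nonneg.2 hvnorm.le), inv_mul_cancel₀ hvnorm.ne', mul_one]
    have hy'norm : ‖y'‖ ≤ 2 := by
      calc ‖y'‖ ≤ ‖(y : B)‖ + ‖a • (‖v‖⁻¹ • v)‖ := norm_sub_le _ _
        _ ≤ 1 + 1 := add_le_add hynorm (by rw [hunit]; exact ha)
        _ = 2 := by norm_num
    have hy'E' : y' ∈ E' := by
      rw [hE'def, Submodule.mem_inf]
      exact ⟨hy'E, LinearMap.mem_ker.2 hy'ker⟩
    have hzHB : A y' ∈ HB := Submodule.mem_map_of_mem hy'E'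
    have hzF : A y' ∈ E.map (A : B →ₗ[ℝ] B) := hHBle hzHB
    refine ⟨a, ha, ⟨A y', hzF⟩, ?_, ?_, ?_⟩
    · rw [hHFdef, Submodule.mem_comap]
      exact hzHB
    · show ‖A y'‖ ≤ 2 * N
      calc ‖A y'‖ ≤ N * ‖y'‖ := hbound y' hy'E
        _ ≤ N * 2 := mul_le_mul_of_nonneg_left hy'norm hN.le
        _ = 2 * N := mul_comm _ _
    · apply Subtype.ext
      have hdecomp : (y : B) = a • (‖v‖⁻¹ • v) + y' := by
        rw [hy'def]; abel
      show (x : B) = _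
      rw [← hxy, hdecomp, map_add, _root_.map_smul]
      rfl
  -- apply the slab estimate
  have hsNuF : ‖uF‖ ≤ N := by rw [huFnorm]; exact hsN
  have hslab := slab_measure_le μ uF HF huFnot hrankF1 hsNuF
  have hμK : μ K ≤ ENNReal.ofReal (2 * s * (4 * N) ^ (q - 1)) * μ (Metric.closedBall 0 1) := by
    refine (measure_mono hKsub).trans ?_
    rw [huFnorm, hHFrank] at hslab
    exact hslab
  -- measure-theoretic facts
  have hb0 : ballVol q ≠ 0 := by
    unfold ballVol
    exact (measure_closedBall_pos volume _ one_pos).ne'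
  have hbt : ballVol q ≠ ⊤ := by
    unfold ballVol
    exact (isCompact_closedBall _ _).measure_lt_top.ne
  have hm0 : μ (Metric.closedBall 0 1) ≠ 0 := (measure_closedBall_pos μ _ one_pos).ne'
  have hmt : μ (Metric.closedBall (0 : ↥(E.map (A : B →ₗ[ℝ] B))) 1) ≠ ⊤ :=
    (isCompact_closedBall _ _).measure_lt_top.ne
  -- unfold detOn
  have hd : detOn A E = (ballVol q / μ (Metric.closedBall 0 1)) * μ K / ballVol q := by
    unfold detOn
    rw [if_pos hinj]
    have hiv : inducedVolume (E.map (A : B →ₗ[ℝ] B)) =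
        (ballVol (Module.finrank ℝ ↥(E.map (A : B →ₗ[ℝ] B))) /
          (Module.finBasis ℝ ↥(E.map (A : B →ₗ[ℝ] B))).addHaar (Metric.closedBall 0 1)) •
          (Module.finBasis ℝ ↥(E.map (A : B →ₗ[ℝ] B))).addHaar := by
      unfold inducedVolume
      rw [dif_pos hFfin]
    have hbv1 : ballVol (Module.finrank ℝ ↥E) = ballVol q := by rw [hq]
    have hbv2 : ballVol (Module.finrank ℝ ↥(E.map (A : B →ₗ[ℝ] B))) = ballVol q := by rw [hrankF]
    rw [hiv, Measure.smul_apply, smul_eq_mul, hbv1, hbv2]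
  rw [hd]
  -- final computation in ℝ≥0∞
  have hle : ballVol q / μ (Metric.closedBall 0 1) * μ K / ballVol q ≤
      ENNReal.ofReal (2 * s * (4 * N) ^ (q - 1)) := by
    set X := ENNReal.ofReal (2 * s * (4 * N) ^ (q - 1)) with hXdef
    set mB := μ (Metric.closedBall (0 : ↥(E.map (A : B →ₗ[ℝ] B))) 1) with hmBdef
    have h1 : ballVol q / mB * μ K / ballVol q ≤ ballVol q / mB * (X * mB) / ballVol q := by
      gcongr
    refine h1.trans_eq ?_
    rw [div_eq_mul_inv, div_eq_mul_inv]
    have h3 : ballVol q * mB⁻¹ * (X * mB) * (ballVol q)⁻¹ =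
        X * (ballVol q * (ballVol q)⁻¹) * (mB⁻¹ * mB) := by ring
    rw [h3, ENNReal.mul_inv_cancel hb0 hbt, ENNReal.inv_mul_cancel hm0 hmt, mul_one, mul_one]
  calc ENNReal.ofReal (2 * 4 ^ (q - 1) : ℝ)⁻¹ *
          (ballVol q / μ (Metric.closedBall 0 1) * μ K / ballVol q)
      ≤ ENNReal.ofReal (2 * 4 ^ (q - 1) : ℝ)⁻¹ *
          ENNReal.ofReal (2 * s * (4 * N) ^ (q - 1)) := mul_le_mul_right hle _
    _ = ENNReal.ofReal ((2 * 4 ^ (q - 1) : ℝ)⁻¹ * (2 * s * (4 * N) ^ (q - 1))) :=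
        (ENNReal.ofReal_mul (by positivity)).symm
    _ = ENNReal.ofReal (s * N ^ (q - 1)) := by
        congr 1
        have h4 : (4 : ℝ) ^ (q - 1) ≠ 0 := by positivity
        rw [mul_pow]
        field_simp

end
end BanachMET
end
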